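/- arXiv:2504.19671 — 7 statements merged into one kernel-verified Lean document; each statement's English description precedes it below -/
import Mathlib

section
/- If G is a connected graph and X is the set of simplicial vertices of G, then any subset of X is a total general position set; in particular the total general position number of G equals the number of simplicial vertices of G. -/
open SimpleGraph

/-- A walk is a shortest path: it is a path whose length equals the graph distance. -/
def IsShortest {V : Type*} (G : SimpleGraph V) {u v : V} (p : G.Walk u v) : Prop :=
  p.IsPath ∧ p.length = G.dist u v

/-- `u` and `v` are `X`-visible: some shortest `u,v`-path meets `X` only in `{u,v}`. -/
def Visible {V : Type*} (G : SimpleGraph V) (X : Set V) (u v : V) : Prop :=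
  ∃ p : G.Walk u v, IsShortest G p ∧ ∀ w ∈ p.support, w ∈ X → w = u ∨ w = v

/-- `u` and `v` are `X`-positionable: every shortest `u,v`-path meets `X` only in `{u,v}`. -/
def Positionable {V : Type*} (G : SimpleGraph V) (X : Set V) (u v : V) : Prop :=
  ∀ p : G.Walk u v, IsShortest G p → ∀ w ∈ p.support, w ∈ X → w = u ∨ w = v

def MutualVisibilitySet {V : Type*} (G : SimpleGraph V) (X : Set V) : Prop :=
  ∀ u ∈ X, ∀ v ∈ X, Visible G X u v

def TotalMVSet {V : Type*} (G : SimpleGraph V) (X : Set V) : Prop :=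
  ∀ u v : V, Visible G X u v

def OuterMVSet {V : Type*} (G : SimpleGraph V) (X : Set V) : Prop :=
  MutualVisibilitySet G X ∧ ∀ u ∈ X, ∀ v ∉ X, Visible G X u v

def DualMVSet {V : Type*} (G : SimpleGraph V) (X : Set V) : Prop :=
  MutualVisibilitySet G X ∧ ∀ u ∉ X, ∀ v ∉ X, Visible G X u v

def GeneralPositionSet {V : Type*} (G : SimpleGraph V) (X : Set V) : Prop :=
  ∀ u ∈ X, ∀ v ∈ X, Positionable G X u v

def TotalGPSet {V : Type*} (G : SimpleGraph V) (X : Set V) : Prop :=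
  ∀ u v : V, Positionable G X u v

def OuterGPSet {V : Type*} (G : SimpleGraph V) (X : Set V) : Prop :=
  GeneralPositionSet G X ∧ ∀ u ∈ X, ∀ v ∉ X, Positionable G X u v

def DualGPSet {V : Type*} (G : SimpleGraph V) (X : Set V) : Prop :=
  GeneralPositionSet G X ∧ ∀ u ∉ X, ∀ v ∉ X, Positionable G X u v

/-- The maximum cardinality of a set of vertices satisfying `P`. -/
noncomputable def maxCard {V : Type*} (P : Set V → Prop) : ℕ :=
  sSup {n : ℕ | ∃ X : Set V, P X ∧ X.ncard = n}

/-- The number of sets achieving `maxCard P`. -/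
noncomputable def numMaxSets {V : Type*} (P : Set V → Prop) : ℕ :=
  {X : Set V | P X ∧ X.ncard = maxCard P}.ncard

/-- A vertex is simplicial if its neighborhood induces a complete graph. -/
def Simplicial {V : Type*} (G : SimpleGraph V) (v : V) : Prop :=
  ∀ u w : V, G.Adj v u → G.Adj v w → u ≠ w → G.Adj u w

/-- A set of vertices is convex: every shortest path between its vertices stays inside it. -/
def ConvexSet {V : Type*} (G : SimpleGraph V) (S : Set V) : Prop :=
  ∀ u ∈ S, ∀ v ∈ S, ∀ p : G.Walk u v, IsShortest G p → ∀ w ∈ p.support, w ∈ S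

lemma simplicial_endpoint {V : Type*} (G : SimpleGraph V) {a b : V} (p : G.Walk a b)
    (hp : IsShortest G p) {w : V} (hw : w ∈ p.support) (hs : Simplicial G w) :
    w = a ∨ w = b := by
  classical
  by_contra hcon
  push_neg at hcon
  obtain ⟨hwa, hwb⟩ := hcon
  set q := p.takeUntil w hw with hq
  set r := p.dropUntil w hw with hr
  have hspec : q.append r = p := p.take_spec hw
  obtain ⟨y, hy, r', hr'⟩ := SimpleGraph.Walk.exists_eq_cons_of_ne hwb r
  obtain ⟨x, hx, s, hsx⟩ := SimpleGraph.Walk.exists_eq_cons_of_ne hwa q.reverse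
  have hxq : x ∈ q.support := by
    have : x ∈ q.reverse.support := by rw [hsx]; simp
    rwa [SimpleGraph.Walk.support_reverse, List.mem_reverse] at this
  have hyr : y ∈ r.support.tail := by rw [hr']; simp
  have hnd : (q.support ++ r.support.tail).Nodup := by
    rw [← SimpleGraph.Walk.support_append, hspec]
    exact hp.1.support_nodup
  have hxy : x ≠ y := by
    intro h
    subst h
    exact (List.disjoint_of_nodup_append hnd) hxq hyr
  have hadj : G.Adj x y := hs x y hx hy hxy
  let w2 : G.Walk a b := s.reverse.append (SimpleGraph.Walk.cons hadj r')
  have hlen : w2.length + 1 = p.length := by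
    have h1 : q.length = s.length + 1 := by
      have := congrArg SimpleGraph.Walk.length hsx
      simpa [SimpleGraph.Walk.length_reverse] using this
    have h2 : r.length = r'.length + 1 := by
      simpa using congrArg SimpleGraph.Walk.length hr'
    have h3 : q.length + r.length = p.length := by
      have := congrArg SimpleGraph.Walk.length hspec
      simpa [SimpleGraph.Walk.length_append] using this
    simp only [w2, SimpleGraph.Walk.length_append, SimpleGraph.Walk.length_cons,
      SimpleGraph.Walk.length_reverse]
    omega
  have hd := SimpleGraph.dist_le w2
  have := hp.2
  omega

lemma totalGP_subset_simplicial {V : Type*} (G : SimpleGraph V) (hG : G.Connected)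
    {X : Set V} (hX : TotalGPSet G X) : X ⊆ {v | Simplicial G v} := by
  intro v hv
  by_contra hns
  simp only [Set.mem_setOf_eq, Simplicial] at hns
  push_neg at hns
  obtain ⟨u, w, hvu, hvw, huw, hnadj⟩ := hns
  let p : G.Walk u w := SimpleGraph.Walk.cons hvu.symm (SimpleGraph.Walk.cons hvw .nil)
  have hpath : p.IsPath := by
    simp only [p, SimpleGraph.Walk.isPath_def, SimpleGraph.Walk.support_cons,
      SimpleGraph.Walk.support_nil]
    simp [hvu.ne', huw, hvw.ne]
  have hdist : G.dist u w = 2 := by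
    have hle : G.dist u w ≤ 2 := by simpa [p] using SimpleGraph.dist_le p
    have h0 : 0 < G.dist u w := hG.pos_dist_of_ne huw
    have h1 : G.dist u w ≠ 1 := fun h => hnadj (SimpleGraph.dist_eq_one_iff_adj.mp h)
    omega
  have hshort : IsShortest G p := ⟨hpath, by simp [p, hdist]⟩
  have := hX u w p hshort v (by simp [p]) hv
  rcases this with h | h
  · exact hvu.ne (h ▸ rfl)
  · exact hvw.ne h

/-- Total general position sets are exactly subsets of the simplicial vertices;
in particular `gp_t(G) = s(G)`. -/
theorem stmt_0 {V : Type*} [Fintype V] (G : SimpleGraph V) (hG : G.Connected) :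
    (∀ Y : Set V, Y ⊆ {v | Simplicial G v} → TotalGPSet G Y) ∧
    maxCard (TotalGPSet G) = {v | Simplicial G v}.ncard := by
  have part1 : ∀ Y : Set V, Y ⊆ {v | Simplicial G v} → TotalGPSet G Y := by
    intro Y hY u v p hp w hw hwY
    exact simplicial_endpoint G p hp hw (hY hwY)
  refine ⟨part1, ?_⟩
  set S : Set V := {v | Simplicial G v}
  have hmem : S.ncard ∈ {n : ℕ | ∃ X : Set V, TotalGPSet G X ∧ X.ncard = n} :=
    ⟨S, part1 S (subset_refl _), rfl⟩
  have hub : ∀ n ∈ {n : ℕ | ∃ X : Set V, TotalGPSet G X ∧ X.ncard = n}, n ≤ S.ncard := by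
    rintro n ⟨X, hX, rfl⟩
    exact Set.ncard_le_ncard (totalGP_subset_simplicial G hG hX) S.toFinite
  exact le_antisymm (csSup_le ⟨_, hmem⟩ hub) (le_csSup ⟨S.ncard, hub⟩ hmem)
end

section
/- If H is a convex subgraph of a graph G and X is a mutual-visibility set of G, then X ∩ V(H) is a mutual-visibility set of H. -/
open SimpleGraph

lemma lift_walk {V : Type*} (G : SimpleGraph V) (S : Set V) :
    ∀ {u v : V} (p : G.Walk u v) (hp : ∀ w ∈ p.support, w ∈ S),
    ∃ q : (SimpleGraph.induce S G).Walk ⟨u, hp u p.start_mem_support⟩ ⟨v, hp v p.end_mem_support⟩,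
      q.map (Embedding.induce S).toHom = p := by
  intro u v p
  induction p with
  | nil => intro hp; exact ⟨.nil, rfl⟩
  | cons h p ih =>
    intro hp
    obtain ⟨q, hq⟩ := ih (fun w hw => hp w (by simp [hw]))
    exact ⟨Walk.cons (by simpa using h) q, by simp [hq]⟩

/-- If `S` induces a convex subgraph of `G` and `X` is a mutual-visibility set of `G`,
then `X ∩ S` is a mutual-visibility set of the subgraph induced by `S`. -/
theorem stmt_2 {V : Type*} (G : SimpleGraph V) (S : Set V) (X : Set V)
    (hS : ConvexSet G S) (hX : MutualVisibilitySet G X) :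
    MutualVisibilitySet (SimpleGraph.induce S G) (Subtype.val ⁻¹' X) := by
  intro u hu v hv
  obtain ⟨p, ⟨hpath, hlen⟩, hvis⟩ := hX u hu v hv
  have hsup : ∀ w ∈ p.support, w ∈ S := hS u u.2 v v.2 p ⟨hpath, hlen⟩
  obtain ⟨q, hq⟩ := lift_walk G S p hsup
  -- the two distances agree
  have hdist : (SimpleGraph.induce S G).dist u v = G.dist u v := by
    apply le_antisymm
    · calc (SimpleGraph.induce S G).dist u v ≤ q.length := SimpleGraph.dist_le q
        _ = p.length := by rw [← Walk.length_map (Embedding.induce S).toHom q]; exact congrArg Walk.length hq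
        _ = G.dist u v := hlen
    · obtain ⟨r, hr⟩ := (Reachable.exists_walk_length_eq_dist ⟨q⟩ :
        ∃ r : (SimpleGraph.induce S G).Walk u v,
          r.length = (SimpleGraph.induce S G).dist u v)
      calc G.dist u v ≤ (r.map (Embedding.induce S).toHom).length :=
            SimpleGraph.dist_le _
        _ = r.length := Walk.length_map _ _
        _ = _ := hr
  have hql : q.length = p.length := by rw [← Walk.length_map (Embedding.induce S).toHom q]; exact congrArg Walk.length hq
  refine ⟨q, ⟨?_, ?_⟩, ?_⟩
  · exact Walk.IsPath.of_map (f := (Embedding.induce S).toHom) (by rw [hq]; exact hpath)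
  · rw [hdist, ← hlen, hql]
  · intro w hw hwX
    have hwp : (w : V) ∈ p.support := by
      have h1 : ((Embedding.induce (G := G) S).toHom w) ∈ (q.map (Embedding.induce S).toHom).support := by
        rw [Walk.support_map]; exact List.mem_map.mpr ⟨w, hw, rfl⟩
      rw [← hq]; exact h1
    rcases hvis w hwp hwX with h | h
    · exact Or.inl (Subtype.ext h)
    · exact Or.inr (Subtype.ext h)
end

section
/- If G is a connected graph and X ⊆ V(G), then X is a total mutual-visibility set of G if and only if any two vertices u,v of G with d_G(u,v) = 2 are X-visible. -/
open SimpleGraph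

/-- `X` is a total mutual-visibility set iff every two vertices at distance 2 are
`X`-visible. -/
theorem stmt_3 {V : Type*} (G : SimpleGraph V) (hG : G.Connected) (X : Set V) :
    TotalMVSet G X ↔ ∀ u v : V, G.dist u v = 2 → Visible G X u v := by
  classical
  constructor
  · intro h u v _; exact h u v
  · intro h2
    suffices key : ∀ n : ℕ, ∀ u v : V, G.dist u v = n → Visible G X u v by
      intro u v; exact key (G.dist u v) u v rfl
    intro n
    induction n with
    | zero =>
      intro u v hd
      have huv : u = v := (hG.dist_eq_zero_iff).mp hd
      subst huv
      exact ⟨Walk.nil, ⟨Walk.IsPath.nil, by simp [dist_self]⟩, by simp⟩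
    | succ n ih =>
      match n, ih with
      | 0, _ =>
        intro u v hd
        have hadj : G.Adj u v := dist_eq_one_iff_adj.mp hd
        refine ⟨Walk.cons hadj Walk.nil, ⟨by simp [hadj.ne], by simp [hd]⟩, ?_⟩
        intro w hw _
        simpa using hw
      | 1, _ => exact fun u v hd => h2 u v hd
      | (m+2), ih =>
        intro u v hd
        obtain ⟨p, hp⟩ := hG.exists_walk_length_eq_dist u v
        rw [hd] at hp
        cases p with
        | nil => simp at hp
        | @cons _ x1 _ hux1 q =>
          simp only [Walk.length_cons, Nat.succ_inj] at hp
          -- dist x1 v = m + 2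
          have hd1 : G.dist x1 v = m + 2 := by
            have hle : G.dist x1 v ≤ m + 2 := hp ▸ dist_le q
            have hge : m + 3 ≤ 1 + G.dist x1 v := by
              calc m + 3 = G.dist u v := hd.symm
                _ ≤ G.dist u x1 + G.dist x1 v := hG.dist_triangle
                _ ≤ 1 + G.dist x1 v := by
                    have : G.dist u x1 ≤ 1 := by
                      simpa using dist_le (Walk.cons hux1 Walk.nil)
                    omega
            omega
          obtain ⟨R, ⟨Rpath, Rlen⟩, Rcond⟩ := ih x1 v hd1
          rw [hd1] at Rlen
          cases R with
          | nil => simp at Rlen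
          | @cons _ x2 _ hx12 R1 =>
            simp only [Walk.length_cons, Nat.succ_inj] at Rlen
            have hR1path : R1.IsPath ∧ x1 ∉ R1.support := by
              rw [Walk.cons_isPath_iff] at Rpath; exact Rpath
            have hd2 : G.dist u x2 = 2 := by
              have hle : G.dist u x2 ≤ 2 := by
                simpa using dist_le (Walk.cons hux1 (Walk.cons hx12 Walk.nil))
              have hx2v : G.dist x2 v ≤ m + 1 := Rlen ▸ dist_le R1
              have hge : m + 3 ≤ G.dist u x2 + (m + 1) := by
                calc m + 3 = G.dist u v := hd.symm
                  _ ≤ G.dist u x2 + G.dist x2 v := hG.dist_triangle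
                  _ ≤ G.dist u x2 + (m + 1) := by omega
              omega
            obtain ⟨S, ⟨Spath, Slen⟩, Scond⟩ := h2 u x2 hd2
            rw [hd2] at Slen
            set W : G.Walk u v := S.append R1 with hW
            have hWlen : W.length = m + 3 := by
              simp [hW, Walk.length_append, Slen, Rlen]; omega
            have hWcond : ∀ w ∈ W.support, w ∈ X → w = u ∨ w = v := by
              intro w hw hwX
              rw [hW, Walk.mem_support_append_iff] at hw
              rcases hw with hw | hw
              · rcases Scond w hw hwX with h | h
                · exact Or.inl h
                · subst h
                  rcases Rcond w (by simp) hwX with h | h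
                  · exact absurd h.symm hx12.ne
                  · exact Or.inr h
              · rcases Rcond w (by simp [hw]) hwX with h | h
                · subst h; exact absurd hw hR1path.2
                · exact Or.inr h
            refine ⟨W.bypass, ⟨W.bypass_isPath, ?_⟩, ?_⟩
            · have h1 : G.dist u v ≤ W.bypass.length := dist_le _
              have h2' : W.bypass.length ≤ W.length := Walk.length_bypass_le _
              omega
            · intro w hw hwX
              exact hWcond w (W.support_bypass_subset hw) hwX
end

section
/- If G is a connected graph and X is a general position set of G, then X is a dual general position set if and only if the subgraph G − X (induced on V(G) \ X) is convex in G. -/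
open SimpleGraph

/-- A general position set `X` is a dual general position set iff `G - X` is convex. -/
theorem stmt_4 {V : Type*} (G : SimpleGraph V) (hG : G.Connected) (X : Set V)
    (hX : GeneralPositionSet G X) :
    DualGPSet G X ↔ ConvexSet G Xᶜ := by
  constructor
  · rintro ⟨-, h⟩ u hu v hv p hp w hw
    intro hwX
    rcases h u hu v hv p hp w hw hwX with rfl | rfl
    · exact hu hwX
    · exact hv hwX
  · intro h
    refine ⟨hX, fun u hu v hv p hp w hw hwX => ?_⟩
    exact absurd hwX (h u hu v hv p hp w hw)
end

section
/- For p ≥ 3, the mutual-visibility number of the Sierpiński graph S_p^2 equals (p+1)²/4 if p is odd and p(p+2)/4 if p is even. -/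
open SimpleGraph

/-- The Sierpiński graph `S_p^2` on vertex set `[p]_0 × [p]_0`:
`(i,j) ~ (i,j')` for `j ≠ j'`, and `(i,j) ~ (j,i)` for `i ≠ j`. -/
def SP2 (p : ℕ) : SimpleGraph (Fin p × Fin p) where
  Adj u v := (u.1 = v.1 ∧ u.2 ≠ v.2) ∨ (v.1 = u.2 ∧ v.2 = u.1 ∧ u.1 ≠ u.2)
  symm := by
    constructor
    rintro ⟨a, b⟩ ⟨c, d⟩ (⟨h1, h2⟩ | ⟨h1, h2, h3⟩) <;> simp_all <;> tauto
  loopless := by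
    constructor
    rintro ⟨a, b⟩ (⟨h1, h2⟩ | ⟨h1, h2, h3⟩) <;> simp_all

section Generic
variable {V : Type*} {G : SimpleGraph V} {u v : V}

lemma walk_len1 (W : G.Walk u v) (h : W.length = 1) : G.Adj u v ∧ W.support = [u, v] := by
  cases W with
  | nil => simp at h
  | @cons _ w _ h1 W' =>
    have hl : W'.length = 0 := by simpa using h
    have hw : w = v := SimpleGraph.Walk.eq_of_length_eq_zero hl
    subst hw
    have hn : W' = .nil := SimpleGraph.Walk.nil_iff_eq_nil.mp (SimpleGraph.Walk.length_eq_zero_iff.mp hl)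
    subst hn
    exact ⟨h1, by simp⟩

lemma walk_len2 (W : G.Walk u v) (h : W.length = 2) :
    ∃ w, G.Adj u w ∧ G.Adj w v ∧ W.support = [u, w, v] := by
  cases W with
  | nil => simp at h
  | @cons _ w _ h1 W' =>
    have hl : W'.length = 1 := by simpa using h
    obtain ⟨h2, hs⟩ := walk_len1 W' hl
    exact ⟨w, h1, h2, by simp [hs]⟩

lemma walk_len3 (W : G.Walk u v) (h : W.length = 3) :
    ∃ w1 w2, G.Adj u w1 ∧ G.Adj w1 w2 ∧ G.Adj w2 v ∧ W.support = [u, w1, w2, v] := by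
  cases W with
  | nil => simp at h
  | @cons _ w _ h1 W' =>
    have hl : W'.length = 2 := by simpa using h
    obtain ⟨w2, h2, h3, hs⟩ := walk_len2 W' hl
    exact ⟨w, w2, h1, h2, h3, by simp [hs]⟩

lemma two_le_dist (hr : G.Reachable u v) (hne : u ≠ v) (hadj : ¬ G.Adj u v) :
    2 ≤ G.dist u v := by
  obtain ⟨W, hW⟩ := hr.exists_walk_length_eq_dist
  by_contra hlt
  push_neg at hlt
  rcases (show W.length = 0 ∨ W.length = 1 by omega) with h0 | h1
  · exact hne (SimpleGraph.Walk.eq_of_length_eq_zero h0)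
  · exact hadj (walk_len1 W h1).1

lemma three_le_dist (hr : G.Reachable u v) (hne : u ≠ v) (hadj : ¬ G.Adj u v)
    (hcn : ¬ ∃ w, G.Adj u w ∧ G.Adj w v) : 3 ≤ G.dist u v := by
  obtain ⟨W, hW⟩ := hr.exists_walk_length_eq_dist
  by_contra hlt
  push_neg at hlt
  rcases (show W.length = 0 ∨ W.length = 1 ∨ W.length = 2 by omega) with h0 | h1 | h2
  · exact hne (SimpleGraph.Walk.eq_of_length_eq_zero h0)
  · exact hadj (walk_len1 W h1).1
  · obtain ⟨w, hw1, hw2, _⟩ := walk_len2 W h2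
    exact hcn ⟨w, hw1, hw2⟩

lemma dist_eq_two (W : G.Walk u v) (hW : W.length = 2) (hne : u ≠ v) (hadj : ¬ G.Adj u v) :
    G.dist u v = 2 :=
  le_antisymm (hW ▸ SimpleGraph.dist_le W) (two_le_dist W.reachable hne hadj)

lemma dist_eq_three (W : G.Walk u v) (hW : W.length = 3) (hne : u ≠ v) (hadj : ¬ G.Adj u v)
    (hcn : ¬ ∃ w, G.Adj u w ∧ G.Adj w v) : G.dist u v = 3 :=
  le_antisymm (hW ▸ SimpleGraph.dist_le W) (three_le_dist W.reachable hne hadj hcn)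

lemma vis2 {X : Set V} (h : Visible G X u v) (hd : G.dist u v = 2) :
    ∃ w, G.Adj u w ∧ G.Adj w v ∧ (w ∈ X → w = u ∨ w = v) := by
  obtain ⟨W, ⟨_, hlen⟩, hsup⟩ := h
  rw [hd] at hlen
  obtain ⟨w, h1, h2, hs⟩ := walk_len2 W hlen
  exact ⟨w, h1, h2, fun hx => hsup w (by simp [hs]) hx⟩

lemma vis3 {X : Set V} (h : Visible G X u v) (hd : G.dist u v = 3) :
    ∃ w1 w2, G.Adj u w1 ∧ G.Adj w1 w2 ∧ G.Adj w2 v ∧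
      (w1 ∈ X → w1 = u ∨ w1 = v) ∧ (w2 ∈ X → w2 = u ∨ w2 = v) := by
  obtain ⟨W, ⟨_, hlen⟩, hsup⟩ := h
  rw [hd] at hlen
  obtain ⟨w1, w2, h1, h2, h3, hs⟩ := walk_len3 W hlen
  exact ⟨w1, w2, h1, h2, h3, fun hx => hsup w1 (by simp [hs]) hx,
    fun hx => hsup w2 (by simp [hs]) hx⟩

end Generic
section SP2Lemmas
variable {p : ℕ} {i j x y c z : Fin p}

lemma sp2_adj_iff {a b : Fin p × Fin p} :
    (SP2 p).Adj a b ↔ (a.1 = b.1 ∧ a.2 ≠ b.2) ∨ (b.1 = a.2 ∧ b.2 = a.1 ∧ a.1 ≠ a.2) :=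
  Iff.rfl

lemma sp2_nadj (hij : i ≠ j) (hxj : x ≠ j) : ¬ (SP2 p).Adj (i, x) (j, y) := by
  rintro (⟨h, -⟩ | ⟨h, -, -⟩)
  · exact hij h
  · exact hxj h.symm

lemma sp2_nocn (hij : i ≠ j) (hxj : x ≠ j) (hyi : y ≠ i) :
    ¬ ∃ w, (SP2 p).Adj (i, x) w ∧ (SP2 p).Adj w (j, y) := by
  rintro ⟨⟨a, b⟩, h1, h2⟩
  rcases h1 with ⟨e1, e2⟩ | ⟨e1, e2, e3⟩ <;> rcases h2 with ⟨f1, f2⟩ | ⟨f1, f2, f3⟩ <;>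
    simp_all

lemma sp2_class2 (hij : i ≠ j) (hxj : x ≠ j) {w : Fin p × Fin p}
    (h1 : (SP2 p).Adj (i, x) w) (h2 : (SP2 p).Adj w (j, i)) : w = (i, j) := by
  obtain ⟨a, b⟩ := w
  rcases h1 with ⟨e1, e2⟩ | ⟨e1, e2, e3⟩ <;> rcases h2 with ⟨f1, f2⟩ | ⟨f1, f2, f3⟩ <;>
    simp_all

lemma sp2_class3 (hij : i ≠ j) (hxj : x ≠ j) (hyi : y ≠ i) {w1 w2 : Fin p × Fin p}
    (h1 : (SP2 p).Adj (i, x) w1) (h2 : (SP2 p).Adj w1 w2) (h3 : (SP2 p).Adj w2 (j, y)) :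
    (w1 = (i, j) ∧ w2 = (j, i)) ∨ (x = y ∧ w1 = (x, i) ∧ w2 = (x, j)) := by
  obtain ⟨a, b⟩ := w1
  obtain ⟨c, d⟩ := w2
  rcases h1 with ⟨e1, e2⟩ | ⟨e1, e2, e3⟩ <;> rcases h3 with ⟨f1, f2⟩ | ⟨f1, f2, f3⟩ <;>
    rcases h2 with ⟨g1, g2⟩ | ⟨g1, g2, g3⟩ <;> simp_all

lemma sp2_dist3 (hij : i ≠ j) (hxj : x ≠ j) (hyi : y ≠ i) :
    (SP2 p).dist (i, x) (j, y) = 3 := by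
  have a1 : (SP2 p).Adj (i, x) (i, j) := Or.inl ⟨rfl, hxj⟩
  have a2 : (SP2 p).Adj (i, j) (j, i) := Or.inr ⟨rfl, rfl, hij⟩
  have a3 : (SP2 p).Adj (j, i) (j, y) := Or.inl ⟨rfl, fun h => hyi h.symm⟩
  exact dist_eq_three (.cons a1 (.cons a2 (.cons a3 .nil))) rfl (fun h => hij (congrArg Prod.fst h))
    (sp2_nadj hij hxj) (sp2_nocn hij hxj hyi)

lemma sp2_dist2 (hij : i ≠ j) (hxj : x ≠ j) :
    (SP2 p).dist (i, x) (j, i) = 2 := by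
  have a1 : (SP2 p).Adj (i, x) (i, j) := Or.inl ⟨rfl, hxj⟩
  have a2 : (SP2 p).Adj (i, j) (j, i) := Or.inr ⟨rfl, rfl, hij⟩
  exact dist_eq_two (.cons a1 (.cons a2 .nil)) rfl (fun h => hij (congrArg Prod.fst h)) (sp2_nadj hij hxj)

end SP2Lemmas
section MVLemmas
variable {p : ℕ} {X : Set (Fin p × Fin p)} {i j c z : Fin p}

/-- Step A: if a block contains a port to `j` and another vertex, then `(j,i) ∉ X`. -/
lemma mv_stepA (hX : MutualVisibilitySet (SP2 p) X) (hij : i ≠ j)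
    (h1 : (i, j) ∈ X) (h2 : (i, c) ∈ X) (hcj : c ≠ j) : (j, i) ∉ X := by
  intro hji
  obtain ⟨w, hw1, hw2, hwX⟩ := vis2 (hX _ h2 _ hji) (sp2_dist2 hij hcj)
  have hw : w = (i, j) := sp2_class2 hij hcj hw1 hw2
  subst hw
  rcases hwX h1 with h | h
  · exact hcj (by simpa using (Prod.mk.injEq .. ▸ h).2.symm)
  · exact hij (congrArg Prod.fst h)

/-- Step B: the partner block is then forced to live in column `c`. -/
lemma mv_stepB (hX : MutualVisibilitySet (SP2 p) X) (hij : i ≠ j)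
    (h1 : (i, j) ∈ X) (h2 : (i, c) ∈ X) (hcj : c ≠ j) (h3 : (j, z) ∈ X) : z = c := by
  have hzi : z ≠ i := fun h => mv_stepA hX hij h1 h2 hcj (h ▸ h3)
  by_contra hzc
  obtain ⟨w1, w2, a1, a2, a3, e1, e2⟩ := vis3 (hX _ h2 _ h3) (sp2_dist3 hij hcj hzi)
  rcases sp2_class3 hij hcj hzi a1 a2 a3 with ⟨rfl, rfl⟩ | ⟨hcz, -, -⟩
  · rcases e1 h1 with h | h
    · exact hcj ((Prod.mk.injEq .. ▸ h).2.symm)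
    · exact hij (congrArg Prod.fst h)
  · exact hzc hcz.symm

/-- A block with a port to a nonempty block has at most two vertices. -/
lemma mv_C1 (hX : MutualVisibilitySet (SP2 p) X) (hij : i ≠ j)
    (h1 : (i, j) ∈ X) (h3 : (j, z) ∈ X) {c1 c2 : Fin p} (h2 : (i, c1) ∈ X)
    (h2' : (i, c2) ∈ X) (hne : c1 ≠ c2) (hc1 : c1 ≠ j) (hc2 : c2 ≠ j) : False := by
  have e1 := mv_stepB hX hij h1 h2 hc1 h3
  have e2 := mv_stepB hX hij h1 h2' hc2 h3
  exact hne (e1.symm.trans e2)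

/-- If all blocks are nonempty, no block contains a port plus another vertex. -/
lemma mv_K (hX : MutualVisibilitySet (SP2 p) X) (hij : i ≠ j)
    (h1 : (i, j) ∈ X) (h2 : (i, c) ∈ X) (hcj : c ≠ j)
    (hall : ∀ b : Fin p, ∃ z, (b, z) ∈ X) : False := by
  obtain ⟨z, hz⟩ := hall j
  have hzc := mv_stepB hX hij h1 h2 hcj hz
  rw [hzc] at hz
  -- now (j, c) ∈ X
  have hci : c ≠ i := fun h => mv_stepA hX hij h1 h2 hcj (h ▸ hz)
  obtain ⟨w1, w2, a1, a2, a3, e1, e2⟩ := vis3 (hX _ h2 _ hz) (sp2_dist3 hij hcj hci)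
  rcases sp2_class3 hij hcj hci a1 a2 a3 with ⟨rfl, rfl⟩ | ⟨-, rfl, rfl⟩
  · rcases e1 h1 with h | h
    · exact hcj ((Prod.mk.injEq .. ▸ h).2.symm)
    · exact hij (congrArg Prod.fst h)
  · -- w1 = (c, i), w2 = (c, j) : both excluded from X
    have hciX : (c, i) ∉ X := by
      intro hh
      rcases e1 hh with h | h
      · exact hci (congrArg Prod.fst h)
      · exact hcj (congrArg Prod.fst h)
    have hcjX : (c, j) ∉ X := by
      intro hh
      rcases e2 hh with h | h
      · exact hci (congrArg Prod.fst h)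
      · exact hcj (congrArg Prod.fst h)
    obtain ⟨z', hz'⟩ := hall c
    have hz'i : z' ≠ i := fun h => hciX (h ▸ hz')
    have hz'j : z' ≠ j := fun h => hcjX (h ▸ hz')
    have hic : i ≠ c := hci.symm
    have hjc : j ≠ c := hcj.symm
    obtain ⟨v1, v2, b1, b2, b3, f1, f2⟩ := vis3 (hX _ h1 _ hz') (sp2_dist3 hic hjc hz'i)
    rcases sp2_class3 hic hjc hz'i b1 b2 b3 with ⟨rfl, rfl⟩ | ⟨hjz', -, -⟩
    · rcases f1 h2 with h | h
      · exact hcj ((Prod.mk.injEq .. ▸ h).2)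
      · exact hic (congrArg Prod.fst h)
    · exact hz'j hjz'.symm

end MVLemmas
section Counting

lemma arith_prod {p k : ℕ} (hp : 3 ≤ p) (hk : k ≤ p) :
    k * (p + 1 - k) ≤ (if Odd p then (p + 1) ^ 2 / 4 else p * (p + 2) / 4) := by
  obtain ⟨m, hm⟩ : ∃ m, k + m = p + 1 := ⟨p + 1 - k, by omega⟩
  rcases Nat.even_or_odd p with he | ho
  · rw [if_neg (by simpa [Nat.not_odd_iff_even] using he)]
    rw [Nat.le_div_iff_mul_le (by norm_num)]
    obtain ⟨a, ha⟩ := he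
    have hkm : k ≠ m := by omega
    have h1 : (1 : ℤ) ≤ ((k : ℤ) - m) ^ 2 := by
      have h0 : ((k : ℤ) - m) ≠ 0 := by
        intro h; exact hkm (by omega)
      have := Int.one_le_abs h0
      nlinarith [abs_nonneg ((k : ℤ) - m), sq_abs ((k : ℤ) - m)]
    have : (p + 1 - k) = m := by omega
    rw [this]
    zify
    nlinarith [h1]
  · rw [if_pos ho]
    rw [Nat.le_div_iff_mul_le (by norm_num)]
    have : (p + 1 - k) = m := by omega
    rw [this]
    zify
    nlinarith [sq_nonneg ((k : ℤ) - m)]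

lemma arith_p {p : ℕ} (hp : 3 ≤ p) :
    p ≤ (if Odd p then (p + 1) ^ 2 / 4 else p * (p + 2) / 4) := by
  rcases Nat.even_or_odd p with he | ho
  · rw [if_neg (by simpa [Nat.not_odd_iff_even] using he)]
    rw [Nat.le_div_iff_mul_le (by norm_num)]
    nlinarith
  · rw [if_pos ho]
    rw [Nat.le_div_iff_mul_le (by norm_num)]
    nlinarith

lemma upper_bound {p : ℕ} (hp : 3 ≤ p) {X : Set (Fin p × Fin p)}
    (hX : MutualVisibilitySet (SP2 p) X) :
    X.ncard ≤ if Odd p then (p + 1) ^ 2 / 4 else p * (p + 2) / 4 := by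
  classical
  set T := if Odd p then (p + 1) ^ 2 / 4 else p * (p + 2) / 4 with hT
  have hfin : X.Finite := Set.toFinite X
  set F : Finset (Fin p × Fin p) := hfin.toFinset with hF
  have hmemF : ∀ v, v ∈ F ↔ v ∈ X := fun v => hfin.mem_toFinset
  have hcard : X.ncard = F.card := Set.ncard_eq_toFinset_card X hfin
  set B : Finset (Fin p) := F.image Prod.fst with hB
  set k := B.card with hk
  have hkp : k ≤ p := by
    calc k ≤ Finset.univ.card := Finset.card_le_univ B
    _ = p := by simp
  have hsum : F.card = ∑ i ∈ B, (F.filter fun v => v.1 = i).card :=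
    Finset.card_eq_sum_card_fiberwise (fun v hv => Finset.mem_image_of_mem _ hv)
  -- fiber cardinality equals the number of used columns
  have hfibcols : ∀ i : Fin p,
      (F.filter fun v => v.1 = i).card = ((F.filter fun v => v.1 = i).image Prod.snd).card := by
    intro i
    refine (Finset.card_image_of_injOn ?_).symm
    intro u hu v hv huv
    simp only [Finset.coe_filter, Set.mem_setOf_eq] at hu hv
    exact Prod.ext (hu.2.trans hv.2.symm) huv
  have hcolmem : ∀ i j : Fin p,
      j ∈ (F.filter fun v => v.1 = i).image Prod.snd ↔ (i, j) ∈ X := by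
    intro i j
    constructor
    · rintro hj
      obtain ⟨v, hv, rfl⟩ := Finset.mem_image.mp hj
      obtain ⟨hv1, hv2⟩ := Finset.mem_filter.mp hv
      have := (hmemF v).mp hv1
      rwa [show v = (i, v.2) from Prod.ext hv2 rfl] at this
    · intro hj
      exact Finset.mem_image.mpr ⟨(i, j), Finset.mem_filter.mpr ⟨(hmemF _).mpr hj, rfl⟩, rfl⟩
  have hBmem : ∀ b : Fin p, b ∈ B ↔ ∃ z, (b, z) ∈ X := by
    intro b
    constructor
    · intro hb
      obtain ⟨v, hv, rfl⟩ := Finset.mem_image.mp hb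
      exact ⟨v.2, by rw [show (v.1, v.2) = v from rfl]; exact (hmemF v).mp hv⟩
    · rintro ⟨z, hz⟩
      exact Finset.mem_image.mpr ⟨(b, z), (hmemF _).mpr hz, rfl⟩
  rw [hcard]
  by_cases hkeq : k = p
  · -- all blocks nonempty; every fiber has at most one vertex
    have hall : ∀ b : Fin p, ∃ z, (b, z) ∈ X := by
      have : B = Finset.univ := Finset.eq_univ_of_card B (by simp [← hk, hkeq])
      intro b
      exact (hBmem b).mp (this ▸ Finset.mem_univ b)
    have hfib1 : ∀ i ∈ B, (F.filter fun v => v.1 = i).card ≤ 1 := by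
      intro i _
      by_contra hgt
      push_neg at hgt
      obtain ⟨u, hu, v, hv, huv⟩ := Finset.one_lt_card.mp hgt
      obtain ⟨hu1, hu2⟩ := Finset.mem_filter.mp hu
      obtain ⟨hv1, hv2⟩ := Finset.mem_filter.mp hv
      have hux : u = (i, u.2) := Prod.ext hu2 rfl
      have hvx : v = (i, v.2) := Prod.ext hv2 rfl
      have hu' : (i, u.2) ∈ X := hux ▸ (hmemF u).mp hu1
      have hv' : (i, v.2) ∈ X := hvx ▸ (hmemF v).mp hv1
      have hne : u.2 ≠ v.2 := fun h => huv (hux.trans (h ▸ hvx.symm))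
      by_cases hui : u.2 = i
      · exact mv_K hX (i := i) (j := v.2) (c := u.2)
          (fun h => hne (hui.trans h)) hv' hu' (fun h => hne h) hall
      · exact mv_K hX (i := i) (j := u.2) (c := v.2)
          (fun h => hui h.symm) hu' hv' (fun h => hne h.symm) hall
    calc F.card = ∑ i ∈ B, (F.filter fun v => v.1 = i).card := hsum
      _ ≤ ∑ _i ∈ B, 1 := Finset.sum_le_sum hfib1
      _ = k := by simp [hk]
      _ = p := hkeq
      _ ≤ T := arith_p hp
  · -- k < p : every nonempty fiber has at most p + 1 - k vertices
    have hklt : k < p := lt_of_le_of_ne hkp hkeq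
    have hfib : ∀ i ∈ B, (F.filter fun v => v.1 = i).card ≤ p + 1 - k := by
      intro i hi
      by_cases hsmall : (F.filter fun v => v.1 = i).card ≤ 2
      · omega
      · push_neg at hsmall
        set cols := (F.filter fun v => v.1 = i).image Prod.snd with hcols
        have hcolcard : 2 < cols.card := by rw [← hfibcols]; exact hsmall
        have hdisj : Disjoint cols (B.erase i) := by
          rw [Finset.disjoint_left]
          intro j hj hj'
          have hjne : j ≠ i := Finset.ne_of_mem_erase hj'
          obtain ⟨z, hz⟩ := (hBmem j).mp (Finset.mem_of_mem_erase hj')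
          have hij : (i, j) ∈ X := (hcolmem i j).mp hj
          -- find two more columns distinct from j
          have h2 : 1 < (cols.erase j).card := by
            have := Finset.card_erase_of_mem hj
            omega
          obtain ⟨c1, hc1, c2, hc2, hc12⟩ := Finset.one_lt_card.mp h2
          have hc1j : c1 ≠ j := Finset.ne_of_mem_erase hc1
          have hc2j : c2 ≠ j := Finset.ne_of_mem_erase hc2
          have hc1X : (i, c1) ∈ X := (hcolmem i c1).mp (Finset.mem_of_mem_erase hc1)
          have hc2X : (i, c2) ∈ X := (hcolmem i c2).mp (Finset.mem_of_mem_erase hc2)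
          exact mv_C1 hX hjne.symm hij hz hc1X hc2X hc12 hc1j hc2j
        have hunion : cols.card + (B.erase i).card ≤ p := by
          calc cols.card + (B.erase i).card = (cols ∪ B.erase i).card :=
                (Finset.card_union_of_disjoint hdisj).symm
            _ ≤ Finset.univ.card := Finset.card_le_univ _
            _ = p := by simp
        have herase : (B.erase i).card = k - 1 := by
          rw [Finset.card_erase_of_mem hi, hk]
        have hkpos : 1 ≤ k := Finset.card_pos.mpr ⟨i, hi⟩
        rw [hfibcols i, ← hcols]
        omega
    calc F.card = ∑ i ∈ B, (F.filter fun v => v.1 = i).card := hsum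
      _ ≤ ∑ _i ∈ B, (p + 1 - k) := Finset.sum_le_sum hfib
      _ = k * (p + 1 - k) := by simp [hk, mul_comm]
      _ ≤ T := arith_prod hp hkp

end Counting
section Lower

/-- The extremal mutual-visibility set in `S_p^2`. -/
def lowX (p : ℕ) : Set (Fin p × Fin p) :=
  {v | (v.1 : ℕ) < p / 2 + 1 ∧ (p / 2 + 1 ≤ (v.2 : ℕ) ∨ v.2 = v.1)}

lemma lowX_mv {p : ℕ} (hp : 3 ≤ p) : MutualVisibilitySet (SP2 p) (lowX p) := by
  rintro ⟨i, x⟩ hu ⟨j, y⟩ hv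
  set q := p / 2 + 1 with hq
  obtain ⟨hi, hx⟩ := hu
  obtain ⟨hj, hy⟩ := hv
  simp only at hi hx hj hy
  by_cases hij : i = j
  · subst hij
    by_cases hxy : x = y
    · subst hxy
      exact ⟨.nil, ⟨SimpleGraph.Walk.IsPath.nil, by simp [SimpleGraph.dist_self]⟩,
        fun w hw _ => Or.inl (by simpa using hw)⟩
    · have hadj : (SP2 p).Adj (i, x) (i, y) := Or.inl ⟨rfl, hxy⟩
      refine ⟨.cons hadj .nil, ⟨?_, ?_⟩, ?_⟩
      · rw [SimpleGraph.Walk.cons_isPath_iff]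
        refine ⟨SimpleGraph.Walk.IsPath.nil, ?_⟩
        simp [hxy]
      · rw [SimpleGraph.Walk.length_cons, SimpleGraph.Walk.length_nil,
          SimpleGraph.dist_eq_one_iff_adj.mpr hadj]
      · intro w hw _
        simp only [SimpleGraph.Walk.support_cons, SimpleGraph.Walk.support_nil,
          List.mem_cons, List.mem_singleton] at hw
        rcases hw with h | h | h
        · exact Or.inl h
        · exact Or.inr h
        · simp at h
  · have hxj : x ≠ j := by
      intro h
      rcases hx with h' | h'
      · rw [h] at h'; omega
      · exact hij (h ▸ h').symm
    have hyi : y ≠ i := by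
      intro h
      rcases hy with h' | h'
      · rw [h] at h'; omega
      · exact hij (h ▸ h')
    have a1 : (SP2 p).Adj (i, x) (i, j) := Or.inl ⟨rfl, hxj⟩
    have a2 : (SP2 p).Adj (i, j) (j, i) := Or.inr ⟨rfl, rfl, hij⟩
    have a3 : (SP2 p).Adj (j, i) (j, y) := Or.inl ⟨rfl, fun h => hyi h.symm⟩
    refine ⟨.cons a1 (.cons a2 (.cons a3 .nil)), ⟨?_, ?_⟩, ?_⟩
    · rw [SimpleGraph.Walk.isPath_def]
      simp [List.nodup_cons, Prod.ext_iff]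
      exact ⟨⟨hxj, fun h => absurd h hij, fun h => absurd h hij⟩,
        ⟨fun h => absurd h hij, fun h => absurd h hij⟩, fun h => hyi h.symm⟩
    · rw [sp2_dist3 hij hxj hyi]; rfl
    · intro w hw hwX
      simp only [SimpleGraph.Walk.support_cons, SimpleGraph.Walk.support_nil,
        List.mem_cons, List.not_mem_nil, or_false] at hw
      rcases hw with h | h | h | h
      · exact Or.inl h
      · exfalso
        rw [h] at hwX
        obtain ⟨-, h2⟩ := hwX
        simp only at h2
        rcases h2 with h2 | h2
        · omega
        · exact hij h2.symm
      · exfalso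
        rw [h] at hwX
        obtain ⟨-, h2⟩ := hwX
        simp only at h2
        rcases h2 with h2 | h2
        · omega
        · exact hij h2
      · exact Or.inr h

end Lower
section LowerCard

lemma card_val_lt {p t : ℕ} (ht : t ≤ p) :
    ((Finset.univ : Finset (Fin p)).filter fun y : Fin p => (y : ℕ) < t).card = t := by
  have himg : ((Finset.univ : Finset (Fin p)).filter fun y : Fin p => (y : ℕ) < t).image Fin.val
      = Finset.range t := by
    ext m
    simp only [Finset.mem_image, Finset.mem_filter, Finset.mem_univ, true_and,
      Finset.mem_range]
    constructor
    · rintro ⟨y, hy, rfl⟩; exact hy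
    · intro hm; exact ⟨⟨m, lt_of_lt_of_le hm ht⟩, hm, rfl⟩
  calc ((Finset.univ : Finset (Fin p)).filter fun y : Fin p => (y : ℕ) < t).card
      = (((Finset.univ : Finset (Fin p)).filter fun y : Fin p => (y : ℕ) < t).image Fin.val).card :=
        (Finset.card_image_of_injOn (Fin.val_injective.injOn)).symm
    _ = t := by rw [himg, Finset.card_range]

lemma card_val_ge {p t : ℕ} (ht : t ≤ p) :
    ((Finset.univ : Finset (Fin p)).filter fun y : Fin p => t ≤ (y : ℕ)).card = p - t := by
  have hcongr : ((Finset.univ : Finset (Fin p)).filter fun y : Fin p => t ≤ (y : ℕ))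
      = (Finset.univ : Finset (Fin p)).filter fun y : Fin p => ¬ ((y : ℕ) < t) := by
    apply Finset.filter_congr; intro y _; simp [not_lt]
  have hadd := Finset.card_filter_add_card_filter_not
    (s := (Finset.univ : Finset (Fin p))) (p := fun y => (y : ℕ) < t)
  rw [card_val_lt ht] at hadd
  have hu : (Finset.univ : Finset (Fin p)).card = p := by simp
  rw [hcongr]
  omega

lemma lowX_ncard {p : ℕ} (hp : 3 ≤ p) :
    (lowX p).ncard = if Odd p then (p + 1) ^ 2 / 4 else p * (p + 2) / 4 := by
  classical
  set q := p / 2 + 1 with hqdef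
  have hqp : q ≤ p := by omega
  set Fs : Finset (Fin p × Fin p) :=
    Finset.univ.filter (fun v => (v.1 : ℕ) < q ∧ (q ≤ (v.2 : ℕ) ∨ v.2 = v.1)) with hFs
  have hset : lowX p = ↑Fs := by
    ext v; simp [lowX, hFs, hqdef]
  rw [hset, Set.ncard_coe_finset]
  have hsum : Fs.card = ∑ i ∈ Finset.univ.filter (fun i : Fin p => (i : ℕ) < q),
      (Fs.filter fun v => v.1 = i).card := by
    apply Finset.card_eq_sum_card_fiberwise
    intro v hv
    simp only [hFs, Finset.mem_coe, Finset.mem_filter, Finset.mem_univ, true_and] at hv ⊢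
    exact hv.1
  have hfib : ∀ i ∈ Finset.univ.filter (fun i : Fin p => (i : ℕ) < q),
      (Fs.filter fun v => v.1 = i).card = p - q + 1 := by
    intro i hi'
    have hi : (i : ℕ) < q := by simpa using hi'
    have hinj : (Fs.filter fun v => v.1 = i).card
        = ((Fs.filter fun v => v.1 = i).image Prod.snd).card := by
      refine (Finset.card_image_of_injOn ?_).symm
      intro u hu v hv huv
      simp only [Finset.coe_filter, Set.mem_setOf_eq] at hu hv
      exact Prod.ext (hu.2.trans hv.2.symm) huv
    have himg : (Fs.filter fun v => v.1 = i).image Prod.snd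
        = (Finset.univ.filter fun y : Fin p => q ≤ (y : ℕ)) ∪ {i} := by
      ext y
      simp only [Finset.mem_image, Finset.mem_filter, Finset.mem_univ, true_and,
        Finset.mem_union, Finset.mem_singleton, hFs]
      constructor
      · rintro ⟨v, ⟨⟨-, h2⟩, h3⟩, rfl⟩
        rcases h2 with h2 | h2
        · exact Or.inl h2
        · exact Or.inr (h2.trans h3)
      · intro h
        refine ⟨(i, y), ⟨⟨hi, ?_⟩, rfl⟩, rfl⟩
        rcases h with h | h
        · exact Or.inl h
        · exact Or.inr h
    have hdisj : Disjoint (Finset.univ.filter fun y : Fin p => q ≤ (y : ℕ)) ({i} : Finset (Fin p)) := by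
      simp only [Finset.disjoint_singleton_right, Finset.mem_filter, Finset.mem_univ, true_and]
      omega
    rw [hinj, himg, Finset.card_union_of_disjoint hdisj, card_val_ge hqp,
      Finset.card_singleton]
  rw [hsum, Finset.sum_congr rfl hfib, Finset.sum_const, card_val_lt hqp, smul_eq_mul]
  rcases Nat.even_or_odd p with ⟨a, ha⟩ | ⟨a, ha⟩
  · rw [if_neg (by simp only [Nat.not_odd_iff_even]; exact ⟨a, ha⟩)]
    have h4 : p * (p + 2) = 4 * (a * (a + 1)) := by rw [ha]; ring
    rw [h4, Nat.mul_div_cancel_left _ (by norm_num)]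
    have hqa : q = a + 1 := by omega
    rw [hqa]
    have hrest : p - (a + 1) + 1 = a := by omega
    rw [hrest]; ring
  · rw [if_pos ⟨a, ha⟩]
    have h4 : (p + 1) ^ 2 = 4 * ((a + 1) * (a + 1)) := by rw [ha]; ring
    rw [h4, Nat.mul_div_cancel_left _ (by norm_num)]
    have hqa : q = a + 1 := by omega
    rw [hqa]
    have hrest : p - (a + 1) + 1 = a + 1 := by omega
    rw [hrest]

end LowerCard
/-- The mutual-visibility number of `S_p^2`. -/
theorem stmt_5 (p : ℕ) (hp : 3 ≤ p) :
    maxCard (MutualVisibilitySet (SP2 p)) =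
      if Odd p then (p + 1) ^ 2 / 4 else p * (p + 2) / 4 := by
  have hmv := lowX_mv hp
  have hcard := lowX_ncard hp
  have hub : ∀ n ∈ {n : ℕ | ∃ X : Set (Fin p × Fin p),
      MutualVisibilitySet (SP2 p) X ∧ X.ncard = n},
      n ≤ (if Odd p then (p + 1) ^ 2 / 4 else p * (p + 2) / 4) := by
    rintro n ⟨X, hX, rfl⟩
    exact upper_bound hp hX
  apply le_antisymm
  · exact csSup_le ⟨(lowX p).ncard, lowX p, hmv, rfl⟩ hub
  · calc (if Odd p then (p + 1) ^ 2 / 4 else p * (p + 2) / 4)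
        = (lowX p).ncard := hcard.symm
      _ ≤ maxCard (MutualVisibilitySet (SP2 p)) :=
        le_csSup ⟨_, hub⟩ ⟨lowX p, hmv, rfl⟩
end

section
/- For odd p ≥ 3, the number of maximum mutual-visibility sets of the Sierpiński graph S_p^2 equals binom(p, (p+1)/2), and for even p ≥ 4 it equals binom(p+1, (p+2)/2). -/
open SimpleGraph

namespace MVAux

variable {p : ℕ}

lemma getVert_mem_support {V : Type*} {G : SimpleGraph V} {u v : V} (w : G.Walk u v) (n : ℕ) :
    w.getVert n ∈ w.support := by
  induction w generalizing n with
  | nil => simp [SimpleGraph.Walk.getVert]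
  | cons h q ih =>
    cases n with
    | zero => simp [SimpleGraph.Walk.getVert]
    | succ m => simp only [SimpleGraph.Walk.getVert, SimpleGraph.Walk.support_cons,
        List.mem_cons]; exact Or.inr (ih m)

lemma mem_of_getVert {V : Type*} {G : SimpleGraph V} {u v z : V} {w : G.Walk u v} {n : ℕ}
    (h : w.getVert n = z) : z ∈ w.support := h ▸ getVert_mem_support w n

lemma pair_eq {α β : Type*} {x1 z1 : α} {x2 z2 : β} (h1 : x1 = z1) (h2 : x2 = z2) :
    (x1, x2) = (z1, z2) := by rw [h1, h2]

lemma adj_row {i a b : Fin p} (h : a ≠ b) : (SP2 p).Adj (i, a) (i, b) := Or.inl ⟨rfl, h⟩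

lemma adj_cross {i j : Fin p} (h : i ≠ j) : (SP2 p).Adj (i, j) (j, i) := Or.inr ⟨rfl, rfl, h⟩

lemma adj_cases {i a j b : Fin p} (h : (SP2 p).Adj (i, a) (j, b)) :
    (i = j ∧ a ≠ b) ∨ (j = a ∧ b = i ∧ i ≠ a) := h

lemma fst_ne_of_pair_ne {i a j b : Fin p} (h : i ≠ j) : ((i, a) : Fin p × Fin p) ≠ (j, b) := by
  intro he; exact h (congrArg Prod.fst he)

/-- Distance within a row is 1. -/
lemma dist_row {i a b : Fin p} (h : a ≠ b) : (SP2 p).dist (i, a) (i, b) = 1 := by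
  have h1 := SimpleGraph.dist_le (SimpleGraph.Walk.cons (adj_row (i := i) h) SimpleGraph.Walk.nil)
  simp only [SimpleGraph.Walk.length_cons, SimpleGraph.Walk.length_nil] at h1
  have h2 : (SP2 p).dist (i, a) (i, b) ≠ 0 := by
    rw [SimpleGraph.dist_ne_zero_iff_ne_and_reachable]
    exact ⟨by intro he; exact h (congrArg Prod.snd he),
      (SimpleGraph.Walk.cons (adj_row (i := i) h) SimpleGraph.Walk.nil).reachable⟩
  omega

/-- A cross walk of length ≤ 3 always exists. -/
lemma exists_walk_cross (i a j b : Fin p) (hij : i ≠ j) :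
    ∃ w : (SP2 p).Walk (i, a) (j, b), w.length ≤ 3 := by
  by_cases ha : a = j
  · subst ha
    by_cases hb : b = i
    · subst hb
      exact ⟨.cons (adj_cross hij) .nil, by simp⟩
    · exact ⟨.cons (adj_cross hij) (.cons (adj_row fun he => hb he.symm) .nil), by simp⟩
  · by_cases hb : b = i
    · subst hb
      exact ⟨.cons (adj_row ha) (.cons (adj_cross hij) .nil), by simp⟩
    · exact ⟨.cons (adj_row ha)
        (.cons (adj_cross hij) (.cons (adj_row fun he => hb he.symm) .nil)), by simp⟩

lemma dist_cross_le (i a j b : Fin p) (hij : i ≠ j) : (SP2 p).dist (i, a) (j, b) ≤ 3 := by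
  obtain ⟨w, hw⟩ := exists_walk_cross i a j b hij
  exact le_trans (SimpleGraph.dist_le w) hw

lemma reachable_cross (i a j b : Fin p) (hij : i ≠ j) :
    (SP2 p).Reachable (i, a) (j, b) :=
  (exists_walk_cross i a j b hij).choose.reachable

/-- Distance between generic vertices in different rows is 3. -/
lemma dist_cross_eq (i a j b : Fin p) (hij : i ≠ j) (ha : a ≠ j) (hb : b ≠ i) :
    (SP2 p).dist (i, a) (j, b) = 3 := by
  have hle := dist_cross_le i a j b hij
  by_contra hne
  have hdne : (SP2 p).dist (i, a) (j, b) ≠ 0 := by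
    rw [SimpleGraph.dist_ne_zero_iff_ne_and_reachable]
    exact ⟨fst_ne_of_pair_ne hij, reachable_cross i a j b hij⟩
  obtain ⟨w, hwl⟩ := SimpleGraph.exists_walk_of_dist_ne_zero hdne
  have h12 : w.length = 1 ∨ w.length = 2 := by omega
  have hu : w.getVert 0 = (i, a) := w.getVert_zero
  rcases h12 with h1 | h2
  · have hadj := w.adj_getVert_succ (by omega : 0 < w.length)
    rw [hu, w.getVert_of_length_le (by omega : w.length ≤ 0 + 1)] at hadj
    rcases adj_cases hadj with ⟨e1, _⟩ | ⟨e1, _, _⟩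
    · exact hij e1
    · exact ha e1.symm
  · rcases hx : w.getVert 1 with ⟨x1, x2⟩
    have h01 := w.adj_getVert_succ (by omega : 0 < w.length)
    rw [hu, hx] at h01
    have h12' := w.adj_getVert_succ (by omega : 1 < w.length)
    rw [hx, w.getVert_of_length_le (by omega : w.length ≤ 1 + 1)] at h12'
    rcases adj_cases h01 with ⟨e1, e2⟩ | ⟨e1, e2, e3⟩ <;>
      rcases adj_cases h12' with ⟨f1, f2⟩ | ⟨f1, f2, f3⟩
    · exact hij (by grind)
    · exact hb (by grind)
    · exact ha (by grind)
    · exact hij (by grind)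

/-- Classification of walks of length ≤ 3 between different rows. -/
lemma paths_classify {i a j b : Fin p} (hij : i ≠ j) (w : (SP2 p).Walk (i, a) (j, b))
    (hw : w.length ≤ 3) :
    ((i, j) ∈ w.support ∧ (j, i) ∈ w.support) ∨
    (a = b ∧ a ≠ i ∧ a ≠ j ∧ (a, i) ∈ w.support ∧ (a, j) ∈ w.support) := by
  have hu : w.getVert 0 = (i, a) := w.getVert_zero
  have hv : w.getVert w.length = (j, b) := w.getVert_length
  have hL : w.length = 0 ∨ w.length = 1 ∨ w.length = 2 ∨ w.length = 3 := by omega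
  rcases hL with h0 | h1 | h2 | h3
  · exact absurd (SimpleGraph.Walk.eq_of_length_eq_zero h0) (fst_ne_of_pair_ne hij)
  · have hadj := w.adj_getVert_succ (by omega : 0 < w.length)
    rw [hu, w.getVert_of_length_le (by omega : w.length ≤ 0 + 1)] at hadj
    rcases adj_cases hadj with ⟨e1, _⟩ | ⟨e1, e2, _⟩
    · exact absurd e1 hij
    · exact Or.inl ⟨mem_of_getVert (n := 0) (hu.trans (pair_eq (by grind) (by grind))),
        mem_of_getVert (n := w.length) (hv.trans (pair_eq (by grind) (by grind)))⟩
  · rcases hx : w.getVert 1 with ⟨x1, x2⟩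
    have h01 := w.adj_getVert_succ (by omega : 0 < w.length)
    rw [hu, hx] at h01
    have h12 := w.adj_getVert_succ (by omega : 1 < w.length)
    rw [hx, w.getVert_of_length_le (by omega : w.length ≤ 1 + 1)] at h12
    rcases adj_cases h01 with ⟨e1, e2⟩ | ⟨e1, e2, e3⟩ <;>
      rcases adj_cases h12 with ⟨f1, f2⟩ | ⟨f1, f2, f3⟩
    · exact absurd (show i = j by grind) hij
    · exact Or.inl ⟨mem_of_getVert (n := 1) (hx.trans (pair_eq (by grind) (by grind))),
        mem_of_getVert (n := w.length) (hv.trans (pair_eq (by grind) (by grind)))⟩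
    · exact Or.inl ⟨mem_of_getVert (n := 0) (hu.trans (pair_eq (by grind) (by grind))),
        mem_of_getVert (n := 1) (hx.trans (pair_eq (by grind) (by grind)))⟩
    · exact absurd (show i = j by grind) hij
  · rcases hx : w.getVert 1 with ⟨x1, x2⟩
    rcases hy : w.getVert 2 with ⟨y1, y2⟩
    have h01 := w.adj_getVert_succ (by omega : 0 < w.length)
    rw [hu, hx] at h01
    have h12 := w.adj_getVert_succ (by omega : 1 < w.length)
    rw [hx, hy] at h12
    have h23 := w.adj_getVert_succ (by omega : 2 < w.length)
    rw [hy, w.getVert_of_length_le (by omega : w.length ≤ 2 + 1)] at h23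
    rcases adj_cases h01 with ⟨e1, e2⟩ | ⟨e1, e2, e3⟩ <;>
      rcases adj_cases h12 with ⟨f1, f2⟩ | ⟨f1, f2, f3⟩ <;>
      rcases adj_cases h23 with ⟨g1, g2⟩ | ⟨g1, g2, g3⟩
    · exact absurd (show i = j by grind) hij
    · exact Or.inl ⟨mem_of_getVert (n := 2) (hy.trans (pair_eq (by grind) (by grind))),
        mem_of_getVert (n := w.length) (hv.trans (pair_eq (by grind) (by grind)))⟩
    · exact Or.inl ⟨mem_of_getVert (n := 1) (hx.trans (pair_eq (by grind) (by grind))),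
        mem_of_getVert (n := 2) (hy.trans (pair_eq (by grind) (by grind)))⟩
    · exact absurd (show i = j by grind) hij
    · exact Or.inl ⟨mem_of_getVert (n := 0) (hu.trans (pair_eq (by grind) (by grind))),
        mem_of_getVert (n := 1) (hx.trans (pair_eq (by grind) (by grind)))⟩
    · exact Or.inr ⟨by grind, fun h => e3 (by grind), fun h => g3 (by grind),
        mem_of_getVert (n := 1) (hx.trans (pair_eq (by grind) (by grind))),
        mem_of_getVert (n := 2) (hy.trans (pair_eq (by grind) (by grind)))⟩
    · exact absurd (show i = j by grind) hij
    · exact Or.inl ⟨mem_of_getVert (n := 0) (hu.trans (pair_eq (by grind) (by grind))),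
        mem_of_getVert (n := w.length) (hv.trans (pair_eq (by grind) (by grind)))⟩



lemma visible_refl {V : Type*} (G : SimpleGraph V) (X : Set V) (u : V) : Visible G X u u :=
  ⟨SimpleGraph.Walk.nil, ⟨SimpleGraph.Walk.IsPath.nil, by simp [SimpleGraph.dist_self]⟩,
    by simp⟩

lemma visible_row {X : Set (Fin p × Fin p)} {i a b : Fin p} (hab : a ≠ b) :
    Visible (SP2 p) X (i, a) (i, b) := by
  refine ⟨SimpleGraph.Walk.cons (adj_row hab) SimpleGraph.Walk.nil, ⟨?_, ?_⟩, ?_⟩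
  · rw [SimpleGraph.Walk.isPath_def]
    simp only [SimpleGraph.Walk.support_cons, SimpleGraph.Walk.support_nil]
    refine List.nodup_cons.2 ⟨?_, List.nodup_singleton _⟩
    simp only [List.mem_singleton, Prod.mk.injEq]
    rintro ⟨-, h2⟩
    exact hab h2
  · simp [dist_row hab]
  · intro w hw _
    simp only [SimpleGraph.Walk.support_cons, SimpleGraph.Walk.support_nil,
      List.mem_cons, List.mem_singleton] at hw
    rcases hw with h | h | h
    · exact Or.inl h
    · exact Or.inr h
    · simp at h

lemma visible_cross {X : Set (Fin p × Fin p)} {i a j b : Fin p} (hij : i ≠ j) (ha : a ≠ j)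
    (hb : b ≠ i) (h1 : ((i, j) : Fin p × Fin p) ∉ X) (h2 : ((j, i) : Fin p × Fin p) ∉ X) :
    Visible (SP2 p) X (i, a) (j, b) := by
  refine ⟨SimpleGraph.Walk.cons (adj_row ha) (SimpleGraph.Walk.cons (adj_cross hij)
      (SimpleGraph.Walk.cons (adj_row fun he => hb he.symm) SimpleGraph.Walk.nil)), ⟨?_, ?_⟩, ?_⟩
  · rw [SimpleGraph.Walk.isPath_def]
    simp only [SimpleGraph.Walk.support_cons, SimpleGraph.Walk.support_nil]
    refine List.nodup_cons.2 ⟨?_, List.nodup_cons.2 ⟨?_, List.nodup_cons.2 ⟨?_, List.nodup_singleton _⟩⟩⟩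
    · simp only [List.mem_cons, List.mem_singleton, Prod.mk.injEq]
      push_neg
      refine ⟨fun _ => ha, fun h => absurd h hij, fun h => absurd h hij, by simp⟩
    · simp only [List.mem_cons, List.mem_singleton, Prod.mk.injEq]
      push_neg
      refine ⟨fun h => absurd h hij, fun h => absurd h hij, by simp⟩
    · simp only [List.mem_cons, List.mem_singleton, Prod.mk.injEq, List.not_mem_nil]
      push_neg
      refine ⟨fun _ => fun h => hb h.symm, by simp⟩
  · simpa using (dist_cross_eq i a j b hij ha hb).symm
  · intro w hw hwX
    simp only [SimpleGraph.Walk.support_cons, SimpleGraph.Walk.support_nil,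
      List.mem_cons, List.mem_singleton] at hw
    rcases hw with h | h | h | h | h
    · exact Or.inl h
    · exact absurd (h ▸ hwX) h1
    · exact absurd (h ▸ hwX) h2
    · exact Or.inr h
    · simp at h

/-- The extremal sets. -/
def XAs (A : Finset (Fin p)) : Set (Fin p × Fin p) :=
  {q | q.1 ∈ A ∧ (q.2 ∉ A ∨ q.2 = q.1)}

lemma XAs_mv (A : Finset (Fin p)) : MutualVisibilitySet (SP2 p) (XAs A) := by
  rintro ⟨i, a⟩ ⟨hiA, ha⟩ ⟨j, b⟩ ⟨hjA, hb⟩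
  by_cases hij : i = j
  · subst hij
    by_cases hab : a = b
    · subst hab; exact visible_refl _ _ _
    · exact visible_row hab
  · have haj : a ≠ j := by
      rcases ha with h | h
      · exact fun he => h (he ▸ hjA)
      · have h' : a = i := h
        exact fun he => hij (h'.symm.trans he)
    have hbi : b ≠ i := by
      rcases hb with h | h
      · exact fun he => h (he ▸ hiA)
      · have h' : b = j := h
        exact fun he => hij (h'.symm.trans he).symm
    refine visible_cross hij haj hbi ?_ ?_
    · rintro ⟨-, h | h⟩
      · exact h hjA
      · exact hij h.symm
    · rintro ⟨-, h | h⟩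
      · exact h hiA
      · exact hij h

/-- Key structural consequence of mutual visibility. -/
lemma K1 {X : Set (Fin p × Fin p)} (hX : MutualVisibilitySet (SP2 p) X)
    {i j a b : Fin p} (hij : i ≠ j) (hja : a ≠ j)
    (hiA : ((i, a) : Fin p × Fin p) ∈ X) (hijX : ((i, j) : Fin p × Fin p) ∈ X)
    (hjb : ((j, b) : Fin p × Fin p) ∈ X) :
    a = b ∧ a ≠ i ∧ ((a, i) : Fin p × Fin p) ∉ X ∧ ((a, j) : Fin p × Fin p) ∉ X := by
  obtain ⟨w, ⟨hwp, hwl⟩, hvis⟩ := hX _ hiA _ hjb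
  have hw3 : w.length ≤ 3 := hwl ▸ dist_cross_le i a j b hij
  rcases paths_classify hij w hw3 with ⟨hm1, _⟩ | ⟨hab, hai, haj, hm1, hm2⟩
  · rcases hvis _ hm1 hijX with h | h
    · exact absurd (congrArg Prod.snd h).symm hja
    · exact absurd (congrArg Prod.fst h) hij
  · refine ⟨hab, hai, ?_, ?_⟩
    · intro hX1
      rcases hvis _ hm1 hX1 with h | h
      · exact hai (congrArg Prod.fst h)
      · exact haj (congrArg Prod.fst h)
    · intro hX2
      rcases hvis _ hm2 hX2 with h | h
      · exact hai (congrArg Prod.fst h)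
      · exact haj (congrArg Prod.fst h)

/-! ### Arithmetic facts -/

lemma arith_le (k : ℕ) (hkn : k ≤ p) : k * (p + 1 - k) ≤ (p + 1) ^ 2 / 4 := by
  rw [Nat.le_div_iff_mul_le (by norm_num : 0 < 4)]
  zify [show k ≤ p + 1 by omega]
  nlinarith [sq_nonneg ((p : ℤ) + 1 - 2 * k)]

lemma arith_eq (k : ℕ) (hkn : k ≤ p) (hp : 3 ≤ p) :
    k * (p + 1 - k) = (p + 1) ^ 2 / 4 ↔ (2 * k = p ∨ 2 * k = p + 1 ∨ 2 * k = p + 2) := by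
  constructor
  · intro h
    have h1 : 4 * (k * (p + 1 - k)) ≤ (p + 1) ^ 2 := by
      zify [show k ≤ p + 1 by omega]
      nlinarith [sq_nonneg ((p : ℤ) + 1 - 2 * k)]
    have h2 : (p + 1) ^ 2 ≤ 4 * (k * (p + 1 - k)) + 3 := by omega
    have hz1 : 4 * ((k : ℤ) * ((p : ℤ) + 1 - (k : ℤ))) ≤ ((p : ℤ) + 1) ^ 2 ∧
        ((p : ℤ) + 1) ^ 2 ≤ 4 * ((k : ℤ) * ((p : ℤ) + 1 - (k : ℤ))) + 3 := by
      constructor <;> [skip; skip] <;>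
        · zify [show k ≤ p + 1 by omega] at h1 h2 ⊢
          omega
    by_contra hcon
    push_neg at hcon
    have h3 : 2 * (k : ℤ) ≤ (p : ℤ) - 1 ∨ (p : ℤ) + 3 ≤ 2 * (k : ℤ) := by omega
    rcases h3 with h3 | h3 <;>
      nlinarith [hz1.1, hz1.2, sq_nonneg ((p : ℤ) + 1 - 2 * k - 2), sq_nonneg ((p : ℤ) + 1 - 2 * k + 2)]
  · intro h
    have h4 : ∃ r, r ≤ 1 ∧ (p + 1) ^ 2 = 4 * (k * (p + 1 - k)) + r := by
      rcases h with h | h | h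
      · refine ⟨1, le_refl 1, ?_⟩
        zify [show k ≤ p + 1 by omega]
        have hz : (p : ℤ) = 2 * k := by omega
        rw [hz]; ring
      · refine ⟨0, by norm_num, ?_⟩
        zify [show k ≤ p + 1 by omega]
        have hz : (p : ℤ) = 2 * k - 1 := by omega
        rw [hz]; ring
      · refine ⟨1, le_refl 1, ?_⟩
        zify [show k ≤ p + 1 by omega]
        have hz : (p : ℤ) = 2 * k - 2 := by omega
        rw [hz]; ring
    obtain ⟨r, hr, h4⟩ := h4
    omega

/-! ### Rows and fibers -/

def rowS (T : Finset (Fin p × Fin p)) (i : Fin p) : Finset (Fin p) :=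
  Finset.univ.filter (fun a => (i, a) ∈ T)

def occ (T : Finset (Fin p × Fin p)) : Finset (Fin p) :=
  Finset.univ.filter (fun i => (rowS T i).Nonempty)

lemma mem_rowS {T : Finset (Fin p × Fin p)} {i a : Fin p} : a ∈ rowS T i ↔ (i, a) ∈ T := by
  simp [rowS]

lemma mem_occ {T : Finset (Fin p × Fin p)} {i : Fin p} : i ∈ occ T ↔ (rowS T i).Nonempty := by
  simp [occ]

lemma card_eq_sum_rows (T : Finset (Fin p × Fin p)) : T.card = ∑ i, (rowS T i).card := by
  rw [Finset.card_eq_sum_card_fiberwise (f := Prod.fst) (t := Finset.univ)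
    (fun x _ => Finset.mem_univ _)]
  refine Finset.sum_congr rfl fun i _ => ?_
  have himg : T.filter (fun a => a.1 = i) = (rowS T i).image (fun a => (i, a)) := by
    ext ⟨c, d⟩
    simp only [Finset.mem_filter, Finset.mem_image, mem_rowS]
    constructor
    · rintro ⟨hT, rfl⟩
      exact ⟨d, hT, rfl⟩
    · rintro ⟨a, ha, he⟩
      injection he with h1 h2
      subst h1; subst h2
      exact ⟨ha, rfl⟩
  rw [himg, Finset.card_image_of_injective _ (fun a b h => congrArg Prod.snd h)]

lemma sum_rows_occ (T : Finset (Fin p × Fin p)) :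
    ∑ i, (rowS T i).card = ∑ i ∈ occ T, (rowS T i).card := by
  refine (Finset.sum_subset (Finset.subset_univ _) (fun i _ hi => ?_)).symm
  rw [mem_occ, Finset.not_nonempty_iff_eq_empty] at hi
  simp [hi]

lemma occ_card_le (T : Finset (Fin p × Fin p)) : (occ T).card ≤ p := by
  simpa using Finset.card_le_univ (occ T)

/-! ### The combinatorial core -/

lemma sub_one_mul_add (k q : ℕ) (hk : 1 ≤ k) : (k - 1) * q + q = k * q := by
  obtain ⟨m, rfl⟩ : ∃ m, k = m + 1 := ⟨k - 1, by omega⟩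
  simp only [Nat.add_sub_cancel]
  ring

lemma comb_main (hp : 3 ≤ p) (T : Finset (Fin p × Fin p))
    (cond : ∀ i j a b : Fin p, i ≠ j → a ≠ j → (i, a) ∈ T → (i, j) ∈ T → (j, b) ∈ T →
      a = b ∧ a ≠ i ∧ (a, i) ∉ T ∧ (a, j) ∉ T) :
    T.card ≤ (p + 1) ^ 2 / 4 ∧
    (T.card = (p + 1) ^ 2 / 4 →
      (2 * (occ T).card = p ∨ 2 * (occ T).card = p + 1 ∨ 2 * (occ T).card = p + 2) ∧
      T = Finset.univ.filter (fun q => q.1 ∈ occ T ∧ (q.2 ∉ occ T ∨ q.2 = q.1))) := by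
  set k := (occ T).card with hkdef
  have hk : k ≤ p := occ_card_le T
  have hsum : T.card = ∑ i ∈ occ T, (rowS T i).card := by
    rw [card_eq_sum_rows, sum_rows_occ]
  -- bad rows are small
  have h_badsmall : ∀ i j : Fin p, j ∈ rowS T i → j ≠ i → (rowS T j).Nonempty →
      (rowS T i).card ≤ 2 := by
    intro i j hj hji ⟨b, hb⟩
    have hsub : rowS T i ⊆ insert j {b} := by
      intro a ha
      by_cases haj : a = j
      · exact haj ▸ Finset.mem_insert_self _ _
      · have := (cond i j a b (fun h => hji h.symm) haj (mem_rowS.1 ha) (mem_rowS.1 hj)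
          (mem_rowS.1 hb)).1
        exact Finset.mem_insert.2 (Or.inr (Finset.mem_singleton.2 this))
    exact le_trans (Finset.card_le_card hsub)
      (le_trans (Finset.card_insert_le _ _) (by simp))
  -- a bad row with an extra element forces its witness row to be a singleton
  have h_witness : ∀ i j a : Fin p, j ∈ rowS T i → j ≠ i → a ∈ rowS T i → a ≠ j →
      (rowS T j).card ≤ 1 := by
    intro i j a hj hji ha haj
    have hsub : rowS T j ⊆ {a} := by
      intro b hb
      have := (cond i j a b (fun h => hji h.symm) haj (mem_rowS.1 ha) (mem_rowS.1 hj)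
        (mem_rowS.1 hb)).1
      exact Finset.mem_singleton.2 this.symm
    exact le_trans (Finset.card_le_card hsub) (by simp)
  -- good rows
  have h_good : ∀ i : Fin p, i ∈ occ T →
      (¬ ∃ j, j ∈ rowS T i ∧ j ≠ i ∧ (rowS T j).Nonempty) →
      (rowS T i).card ≤ p + 1 - k := by
    intro i hi hbad
    have hsub : rowS T i ⊆ (occ T)ᶜ ∪ {i} := by
      intro a ha
      by_cases hai : a = i
      · exact Finset.mem_union.2 (Or.inr (Finset.mem_singleton.2 hai))
      · refine Finset.mem_union.2 (Or.inl (Finset.mem_compl.2 fun haocc => ?_))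
        exact hbad ⟨a, ha, hai, mem_occ.1 haocc⟩
    have hcard : ((occ T)ᶜ ∪ {i}).card = p + 1 - k := by
      rw [Finset.card_union_of_disjoint (by
        simp only [Finset.disjoint_singleton_right, Finset.mem_compl, not_not]
        exact hi)]
      simp only [Finset.card_compl, Finset.card_singleton, Fintype.card_fin]
      omega
    exact hcard ▸ Finset.card_le_card hsub
  by_cases hbad : ∃ i ∈ occ T, ∃ j, j ∈ rowS T i ∧ j ≠ i ∧ (rowS T j).Nonempty
  · -- there is a bad row: strict inequality
    obtain ⟨i₀, hi₀, j₀, hj₀row, hj₀ne, hj₀occ⟩ := hbad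
    have hk1 : 1 ≤ k := Finset.card_pos.2 ⟨i₀, hi₀⟩
    have hstrict : T.card + 1 ≤ (p + 1) ^ 2 / 4 := by
      by_cases hkp : k = p
      · -- all rows occupied: all rows have at most one element
        have hocc_univ : ∀ m : Fin p, (rowS T m).Nonempty := by
          have : occ T = Finset.univ := Finset.eq_univ_of_card _ (by simp [← hkdef, hkp])
          intro m
          exact mem_occ.1 (this ▸ Finset.mem_univ m)
        have hallone : ∀ i : Fin p, (rowS T i).card ≤ 1 := by
          intro i
          by_contra hgt
          push_neg at hgt
          obtain ⟨x, hx, y, hy, hxy⟩ := Finset.one_lt_card.1 hgt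
          -- extract j ∈ rowS T i with j ≠ i, and a ∈ rowS T i with a ≠ j
          obtain ⟨j, hjrow, hjne, a, harow, haj⟩ :
              ∃ j, j ∈ rowS T i ∧ j ≠ i ∧ ∃ a, a ∈ rowS T i ∧ a ≠ j := by
            by_cases hxi : x = i
            · exact ⟨y, hy, fun h => hxy (hxi.trans h.symm), x, hx, fun h => hxy h⟩
            · exact ⟨x, hx, hxi, y, hy, fun h => hxy h.symm⟩
          obtain ⟨b, hb⟩ := hocc_univ j
          have h1 := cond i j a b (fun h => hjne h.symm) haj (mem_rowS.1 harow)
            (mem_rowS.1 hjrow) (mem_rowS.1 hb)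
          obtain ⟨b', hb'⟩ := hocc_univ a
          have h2 := cond i a j b' (fun h => h1.2.1 h.symm) (fun h => haj h.symm)
            (mem_rowS.1 hjrow) (mem_rowS.1 harow) (mem_rowS.1 hb')
          exact h1.2.2.2 (h2.1 ▸ mem_rowS.1 hb')
        have hple : T.card ≤ p := by
          calc T.card = ∑ i ∈ occ T, (rowS T i).card := hsum
            _ ≤ (occ T).card • 1 := Finset.sum_le_card_nsmul _ _ _ (fun i _ => hallone i)
            _ = k := by simp [← hkdef]
            _ ≤ p := hk
        have hM : 4 * (p + 1) ≤ (p + 1) ^ 2 := by nlinarith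
        omega
      · -- k ≤ p - 1, so p + 1 - k ≥ 2
        have hq2 : 2 ≤ p + 1 - k := by omega
        have hallq : ∀ i ∈ occ T, (rowS T i).card ≤ p + 1 - k := by
          intro i hi
          by_cases hbi : ∃ j, j ∈ rowS T i ∧ j ≠ i ∧ (rowS T j).Nonempty
          · obtain ⟨j, h1, h2, h3⟩ := hbi
            exact le_trans (h_badsmall i j h1 h2 h3) hq2
          · exact h_good i hi hbi
        have hexone : ∃ i₁ ∈ occ T, (rowS T i₁).card ≤ 1 := by
          by_cases hex : ∃ a ∈ rowS T i₀, a ≠ j₀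
          · obtain ⟨a, ha, haj⟩ := hex
            exact ⟨j₀, mem_occ.2 hj₀occ, h_witness i₀ j₀ a hj₀row hj₀ne ha haj⟩
          · push_neg at hex
            refine ⟨i₀, hi₀, ?_⟩
            exact le_trans (Finset.card_le_card (fun a ha => Finset.mem_singleton.2 (hex a ha)))
              (by simp)
        obtain ⟨i₁, hi₁, hone⟩ := hexone
        have hsum2 : ∑ i ∈ occ T, (rowS T i).card ≤ (k - 1) * (p + 1 - k) + 1 := by
          rw [← Finset.sum_erase_add _ _ hi₁]
          have h1 : ∑ i ∈ (occ T).erase i₁, (rowS T i).card ≤ (k - 1) * (p + 1 - k) := by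
            calc ∑ i ∈ (occ T).erase i₁, (rowS T i).card
                ≤ ((occ T).erase i₁).card • (p + 1 - k) :=
                  Finset.sum_le_card_nsmul _ _ _
                    (fun i hi => hallq i (Finset.mem_of_mem_erase hi))
              _ = (k - 1) * (p + 1 - k) := by
                  rw [Finset.card_erase_of_mem hi₁, smul_eq_mul]
          omega
        have hexpand : (k - 1) * (p + 1 - k) + (p + 1 - k) = k * (p + 1 - k) :=
          sub_one_mul_add k (p + 1 - k) hk1
        have hkqM := arith_le k hk
        omega
    exact ⟨by omega, fun h => absurd h (by omega)⟩
  · -- no bad rows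
    push_neg at hbad
    have hall : ∀ i ∈ occ T, (rowS T i).card ≤ p + 1 - k := fun i hi =>
      h_good i hi (by
        intro ⟨j, h1, h2, h3⟩
        exact (Finset.not_nonempty_iff_eq_empty.2 (hbad i hi j h1 h2)) h3)
    have hle : T.card ≤ k * (p + 1 - k) := by
      calc T.card = ∑ i ∈ occ T, (rowS T i).card := hsum
        _ ≤ (occ T).card • (p + 1 - k) := Finset.sum_le_card_nsmul _ _ _ hall
        _ = k * (p + 1 - k) := by rw [smul_eq_mul]
    refine ⟨le_trans hle (arith_le k hk), fun hTM => ?_⟩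
    -- equality case
    have hkM : k * (p + 1 - k) = (p + 1) ^ 2 / 4 := le_antisymm (arith_le k hk) (hTM ▸ hle)
    have hrows_full : ∀ i ∈ occ T, (rowS T i).card = p + 1 - k := by
      intro i hi
      by_contra hne
      have hlt : (rowS T i).card < p + 1 - k := lt_of_le_of_ne (hall i hi) hne
      have : ∑ i ∈ occ T, (rowS T i).card < ∑ _i ∈ occ T, (p + 1 - k) :=
        Finset.sum_lt_sum hall ⟨i, hi, hlt⟩
      rw [Finset.sum_const, smul_eq_mul, ← hkdef] at this
      omega
    refine ⟨(arith_eq k hk hp).1 hkM, ?_⟩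
    have hrow_eq : ∀ i ∈ occ T, rowS T i = (occ T)ᶜ ∪ {i} := by
      intro i hi
      have hsub : rowS T i ⊆ (occ T)ᶜ ∪ {i} := by
        intro a ha
        by_cases hai : a = i
        · exact Finset.mem_union.2 (Or.inr (Finset.mem_singleton.2 hai))
        · refine Finset.mem_union.2 (Or.inl (Finset.mem_compl.2 fun haocc => ?_))
          exact (Finset.not_nonempty_iff_eq_empty.2 (hbad i hi a ha hai)) (mem_occ.1 haocc)
      have hcard : ((occ T)ᶜ ∪ {i}).card = p + 1 - k := by
        rw [Finset.card_union_of_disjoint (by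
          simp only [Finset.disjoint_singleton_right, Finset.mem_compl, not_not]
          exact hi)]
        simp only [Finset.card_compl, Finset.card_singleton, Fintype.card_fin]
        omega
      exact Finset.eq_of_subset_of_card_le hsub (by rw [hcard, hrows_full i hi])
    ext ⟨c, d⟩
    simp only [Finset.mem_filter, Finset.mem_univ, true_and]
    constructor
    · intro hcd
      have hcocc : c ∈ occ T := mem_occ.2 ⟨d, mem_rowS.2 hcd⟩
      have := hrow_eq c hcocc ▸ mem_rowS.2 hcd
      rcases Finset.mem_union.1 this with h | h
      · exact ⟨hcocc, Or.inl (Finset.mem_compl.1 h)⟩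
      · exact ⟨hcocc, Or.inr (Finset.mem_singleton.1 h)⟩
    · rintro ⟨hcocc, hd⟩
      have : d ∈ rowS T c := by
        rw [hrow_eq c hcocc]
        rcases hd with h | h
        · exact Finset.mem_union.2 (Or.inl (Finset.mem_compl.2 h))
        · exact Finset.mem_union.2 (Or.inr (Finset.mem_singleton.2 h))
      exact mem_rowS.1 this

/-! ### Extremal sets as finsets -/

def XAfin (A : Finset (Fin p)) : Finset (Fin p × Fin p) :=
  Finset.univ.filter (fun q => q.1 ∈ A ∧ (q.2 ∉ A ∨ q.2 = q.1))

lemma XAs_coe (A : Finset (Fin p)) : ((XAfin A : Finset (Fin p × Fin p)) : Set (Fin p × Fin p)) = XAs A := by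
  ext ⟨c, d⟩
  simp [XAs, XAfin]

lemma rowS_XAfin (A : Finset (Fin p)) (i : Fin p) :
    rowS (XAfin A) i = if i ∈ A then Aᶜ ∪ {i} else ∅ := by
  ext a
  by_cases hi : i ∈ A <;> simp [rowS, XAfin, hi] <;> tauto

lemma XAfin_card (A : Finset (Fin p)) : (XAfin A).card = A.card * (p + 1 - A.card) := by
  have hA : A.card ≤ p := by simpa using Finset.card_le_univ A
  rw [card_eq_sum_rows]
  have hrow : ∀ i : Fin p, (rowS (XAfin A) i).card = if i ∈ A then (p + 1 - A.card) else 0 := by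
    intro i
    rw [rowS_XAfin]
    by_cases hi : i ∈ A <;> simp only [hi, if_true, if_false, Finset.card_empty]
    rw [Finset.card_union_of_disjoint (by simp [hi]), Finset.card_compl]
    simp only [Finset.card_singleton, Fintype.card_fin]
    omega
  rw [Finset.sum_congr rfl (fun i _ => hrow i), Finset.sum_ite_mem, Finset.univ_inter,
    Finset.sum_const, smul_eq_mul]

lemma XAs_ncard (A : Finset (Fin p)) : (XAs A).ncard = A.card * (p + 1 - A.card) := by
  rw [← XAs_coe, Set.ncard_coe_finset, XAfin_card]

lemma XAs_ncard_eq_M (hp : 3 ≤ p) (A : Finset (Fin p))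
    (hA : 2 * A.card = p ∨ 2 * A.card = p + 1 ∨ 2 * A.card = p + 2) :
    (XAs A).ncard = (p + 1) ^ 2 / 4 := by
  rw [XAs_ncard]
  exact (arith_eq A.card (by omega) hp).2 hA

/-! ### maxCard and the set of maximum MV-sets -/

lemma mv_cond (X : Set (Fin p × Fin p)) (hX : MutualVisibilitySet (SP2 p) X) :
    ∀ i j a b : Fin p, i ≠ j → a ≠ j → (i, a) ∈ (Set.toFinite X).toFinset →
      (i, j) ∈ (Set.toFinite X).toFinset → (j, b) ∈ (Set.toFinite X).toFinset →
      a = b ∧ a ≠ i ∧ (a, i) ∉ (Set.toFinite X).toFinset ∧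
        (a, j) ∉ (Set.toFinite X).toFinset := by
  intro i j a b hij hja h1 h2 h3
  simp only [Set.Finite.mem_toFinset] at h1 h2 h3 ⊢
  exact K1 hX hij hja h1 h2 h3

lemma mv_card_le (hp : 3 ≤ p) {X : Set (Fin p × Fin p)}
    (hX : MutualVisibilitySet (SP2 p) X) : X.ncard ≤ (p + 1) ^ 2 / 4 := by
  rw [Set.ncard_eq_toFinset_card X (Set.toFinite X)]
  exact (comb_main hp _ (mv_cond X hX)).1

lemma exists_A0 (hp : 3 ≤ p) :
    ∃ A : Finset (Fin p), 2 * A.card = p + 1 ∨ 2 * A.card = p + 2 := by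
  obtain ⟨A, -, hA⟩ := Finset.exists_subset_card_eq
    (s := (Finset.univ : Finset (Fin p))) (n := (p + 2) / 2)
    (by rw [Finset.card_univ, Fintype.card_fin]; omega)
  exact ⟨A, by omega⟩

lemma maxCard_eq (hp : 3 ≤ p) :
    maxCard (MutualVisibilitySet (SP2 p)) = (p + 1) ^ 2 / 4 := by
  obtain ⟨A, hA⟩ := exists_A0 hp
  apply le_antisymm
  · apply csSup_le
    · exact ⟨0, ∅, fun u hu => absurd hu (Set.notMem_empty u), by simp⟩
    · rintro n ⟨X, hX, rfl⟩
      exact mv_card_le hp hX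
  · apply le_csSup
    · refine ⟨(p + 1) ^ 2 / 4, ?_⟩
      rintro n ⟨X, hX, rfl⟩
      exact mv_card_le hp hX
    · exact ⟨XAs A, XAs_mv A, XAs_ncard_eq_M hp A (Or.inr hA)⟩

lemma E_eq (hp : 3 ≤ p) :
    {X : Set (Fin p × Fin p) | MutualVisibilitySet (SP2 p) X ∧ X.ncard = (p + 1) ^ 2 / 4} =
      (fun A : Finset (Fin p) => XAs A) ''
        {A : Finset (Fin p) | 2 * A.card = p ∨ 2 * A.card = p + 1 ∨ 2 * A.card = p + 2} := by
  ext X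
  constructor
  · rintro ⟨hX, hcard⟩
    have hc := (comb_main hp _ (mv_cond X hX)).2 (by
      rw [← Set.ncard_eq_toFinset_card X (Set.toFinite X)]
      exact hcard)
    set O := occ (Set.toFinite X).toFinset with hO
    obtain ⟨hsize, hTeq⟩ := hc
    refine ⟨O, hsize, ?_⟩
    have hmem : ∀ q : Fin p × Fin p, q ∈ X ↔ q ∈ XAs O := by
      intro q
      rw [← Set.Finite.mem_toFinset (Set.toFinite X), hTeq]
      simp [XAs]
    exact (Set.ext hmem).symm
  · rintro ⟨A, hA, rfl⟩
    exact ⟨XAs_mv A, XAs_ncard_eq_M hp A hA⟩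

lemma XAs_inj : Function.Injective (XAs (p := p)) := by
  intro A B h
  ext i
  have := Set.ext_iff.1 h (i, i)
  simpa [XAs] using this

lemma ncard_setOf_finset (P : Finset (Fin p) → Prop) [DecidablePred P] :
    {A : Finset (Fin p) | P A}.ncard = (Finset.univ.filter P).card := by
  rw [Set.ncard_eq_toFinset_card _ (Set.toFinite _)]
  congr 1
  ext A
  simp [Set.Finite.mem_toFinset]

lemma count_card (m : ℕ) :
    (Finset.univ.filter (fun A : Finset (Fin p) => A.card = m)).card = p.choose m := by
  rw [← Finset.powerset_univ, ← Finset.powersetCard_eq_filter, Finset.card_powersetCard,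
    Finset.card_univ, Fintype.card_fin]

lemma numMaxSets_eq (hp : 3 ≤ p) :
    numMaxSets (MutualVisibilitySet (SP2 p)) =
      (Finset.univ.filter (fun A : Finset (Fin p) =>
        2 * A.card = p ∨ 2 * A.card = p + 1 ∨ 2 * A.card = p + 2)).card := by
  unfold numMaxSets
  simp only [maxCard_eq hp]
  rw [E_eq hp, Set.ncard_image_of_injective _ XAs_inj, ncard_setOf_finset]

end MVAux

/-- The number of maximum mutual-visibility sets of `S_p^2`. -/
theorem stmt_6 (p : ℕ) (hp : 3 ≤ p) :
    (Odd p → numMaxSets (MutualVisibilitySet (SP2 p)) = Nat.choose p ((p + 1) / 2)) ∧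
    (Even p → numMaxSets (MutualVisibilitySet (SP2 p)) = Nat.choose (p + 1) ((p + 2) / 2)) := by
  constructor
  · intro hodd
    obtain ⟨m, hm⟩ := hodd
    have hm2 : p = 2 * m + 1 := by omega
    subst hm2
    rw [MVAux.numMaxSets_eq hp]
    have hfe : Finset.univ.filter (fun A : Finset (Fin (2 * m + 1)) =>
          2 * A.card = 2 * m + 1 ∨ 2 * A.card = 2 * m + 1 + 1 ∨ 2 * A.card = 2 * m + 1 + 2)
        = Finset.univ.filter (fun A => A.card = m + 1) :=
      Finset.filter_congr (fun A _ => by omega)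
    rw [hfe, MVAux.count_card]
    congr 1
    omega
  · intro heven
    obtain ⟨m, hm⟩ := heven
    have hm2 : p = 2 * m := by omega
    subst hm2
    rw [MVAux.numMaxSets_eq hp]
    have hfe : Finset.univ.filter (fun A : Finset (Fin (2 * m)) =>
          2 * A.card = 2 * m ∨ 2 * A.card = 2 * m + 1 ∨ 2 * A.card = 2 * m + 2)
        = Finset.univ.filter (fun A => A.card = m ∨ A.card = m + 1) :=
      Finset.filter_congr (fun A _ => by omega)
    rw [hfe, Finset.filter_or, Finset.card_union_of_disjoint (by
        rw [Finset.disjoint_left]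
        intro A h1 h2
        simp only [Finset.mem_filter] at h1 h2
        omega),
      MVAux.count_card, MVAux.count_card]
    rw [show (2 * m + 2) / 2 = m + 1 by omega]
    exact (Nat.choose_succ_succ (2 * m) m).symm
end

section
/- For p ≥ 3 and each τ among the total mutual-visibility number, the outer mutual-visibility number, the total general position number, and the outer general position number, we have τ(S_p^2) = p, and in each case the diagonal {(i,i) : i ∈ [p]_0} is the unique maximum set. -/
open SimpleGraph

namespace Stmt10Aux

lemma sp2_adj {p : ℕ} {u v : Fin p × Fin p} :
    (SP2 p).Adj u v ↔ (u.1 = v.1 ∧ u.2 ≠ v.2) ∨ (v.1 = u.2 ∧ v.2 = u.1 ∧ u.1 ≠ u.2) :=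
  Iff.rfl

lemma shortest_cons {V : Type*} {G : SimpleGraph V} {u v w : V} (h : G.Adj u v) (q : G.Walk v w)
    (hl : (SimpleGraph.Walk.cons h q).length = G.dist u w) :
    q.length = G.dist v w := by
  have h1 : G.dist v w ≤ q.length := SimpleGraph.dist_le q
  obtain ⟨r, hr⟩ := (SimpleGraph.Reachable.exists_walk_length_eq_dist ⟨q⟩ : _)
  have h2 : G.dist u w ≤ (SimpleGraph.Walk.cons h r).length := SimpleGraph.dist_le _
  simp only [SimpleGraph.Walk.length_cons] at hl h2
  omega

lemma simplicial_not_internal {V : Type*} {G : SimpleGraph V} {v : V} (hs : Simplicial G v) :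
    ∀ {u w : V} (q : G.Walk u w), q.IsPath → q.length = G.dist u w →
      v ∈ q.support → v = u ∨ v = w := by
  intro u w q
  induction q with
  | nil => intro _ _ hv; left; simpa using hv
  | @cons u u' w h q ih =>
    intro hp hl hv
    by_cases hvu : v = u
    · exact Or.inl hvu
    have hvq : v ∈ q.support := by
      rcases (SimpleGraph.Walk.mem_support_iff _).mp hv with h' | h'
      · exact absurd h' hvu
      · exact h'
    by_cases hvu' : v = u'
    · by_cases hvw : v = w
      · exact Or.inr hvw
      exfalso
      subst hvu'
      cases q with
      | nil => exact hvw rfl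
      | @cons _ u'' _ h2 q2 =>
        have hnodup := ((SimpleGraph.Walk.cons_isPath_iff _ _).mp hp).2
        have hne : u ≠ u'' := by
          intro he
          exact hnodup (by
            rw [he]
            exact SimpleGraph.Walk.mem_support_iff _ |>.mpr
              (Or.inr (SimpleGraph.Walk.start_mem_support q2)))
        have hadj : G.Adj u u'' := hs u u'' h.symm h2 hne
        have hle : G.dist u w ≤ (SimpleGraph.Walk.cons hadj q2).length :=
          SimpleGraph.dist_le _
        simp only [SimpleGraph.Walk.length_cons] at hle hl
        omega
    · have := ih hp.of_cons (shortest_cons h q hl) hvq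
      rcases this with h1 | h1
      · exact absurd h1 hvu'
      · exact Or.inr h1

lemma diag_simplicial {p : ℕ} (k : Fin p) : Simplicial (SP2 p) (k, k) := by
  intro u w h1 h2 hne
  rcases h1 with ⟨e1, e2⟩ | ⟨e1, e2, e3⟩
  · rcases h2 with ⟨f1, f2⟩ | ⟨f1, f2, f3⟩
    · left
      refine ⟨e1.symm.trans f1, ?_⟩
      intro he
      exact hne (Prod.ext (e1.symm.trans f1) he)
    · exact absurd rfl f3
  · exact absurd rfl e3

lemma sp2_reachable {p : ℕ} (u v : Fin p × Fin p) : (SP2 p).Reachable u v := by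
  obtain ⟨i, a⟩ := u
  obtain ⟨j, b⟩ := v
  have step : ∀ (k c d : Fin p), (SP2 p).Reachable (k, c) (k, d) := by
    intro k c d
    by_cases h : c = d
    · subst h; rfl
    · have hadj : (SP2 p).Adj (k, c) (k, d) := Or.inl ⟨rfl, h⟩
      exact hadj.reachable
  by_cases hij : i = j
  · subst hij; exact step i a b
  · have h1 : (SP2 p).Reachable (i, a) (i, j) := step i a j
    have h2 : (SP2 p).Adj (i, j) (j, i) := Or.inr ⟨rfl, rfl, hij⟩
    exact (h1.trans h2.reachable).trans (step j i b)

lemma pos_to_vis {p : ℕ} {X : Set (Fin p × Fin p)} {u v : Fin p × Fin p}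
    (h : Positionable (SP2 p) X u v) : Visible (SP2 p) X u v := by
  obtain ⟨q, hq1, hq2⟩ := (sp2_reachable u v).exists_path_of_dist
  exact ⟨q, ⟨hq1, hq2⟩, h q ⟨hq1, hq2⟩⟩


lemma shortest3 {p : ℕ} {i j a b : Fin p} (hij : i ≠ j) (haj : a ≠ j) (hbi : b ≠ i)
    (hab : a ≠ b) (q : (SP2 p).Walk (i, a) (j, b)) (hq : IsShortest (SP2 p) q) :
    q.support = [(i, a), (i, j), (j, i), (j, b)] := by
  have e1 : (SP2 p).Adj (i, a) (i, j) := Or.inl ⟨rfl, haj⟩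
  have e2 : (SP2 p).Adj (i, j) (j, i) := Or.inr ⟨rfl, rfl, hij⟩
  have e3 : (SP2 p).Adj (j, i) (j, b) := Or.inl ⟨rfl, fun h => hbi h.symm⟩
  have hd : (SP2 p).dist (i, a) (j, b) ≤ 3 := by
    have := SimpleGraph.dist_le (SimpleGraph.Walk.cons e1 (SimpleGraph.Walk.cons e2
      (SimpleGraph.Walk.cons e3 SimpleGraph.Walk.nil)))
    simpa using this
  have hlen : q.length ≤ 3 := hq.2 ▸ hd
  cases q with
  | nil => exact absurd rfl hij
  | @cons _ x _ h1 q1 =>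
    obtain ⟨x1, x2⟩ := x
    cases q1 with
    | nil =>
      rcases h1 with ⟨f1, f2⟩ | ⟨f1, f2, f3⟩
      · exact absurd (f1 : i = j) hij
      · exact absurd (f1 : j = a).symm haj
    | @cons _ y _ h2 q2 =>
      obtain ⟨y1, y2⟩ := y
      cases q2 with
      | nil =>
        exfalso
        rcases h1 with ⟨f1, f2⟩ | ⟨f1, f2, f3⟩ <;>
          rcases h2 with ⟨k1, k2⟩ | ⟨k1, k2, k3⟩
        · exact hij ((f1 : i = x1).trans (k1 : x1 = j))
        · exact hbi ((k2 : b = x1).trans (f1 : i = x1).symm)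
        · exact haj ((f1 : x1 = a).symm.trans (k1 : x1 = j))
        · exact hij ((k1 : j = x2).trans (f2 : x2 = i)).symm
      | @cons _ z _ h3 q3 =>
        cases q3 with
        | nil =>
          simp only [SimpleGraph.Walk.support_cons, SimpleGraph.Walk.support_nil]
          have key : (x1, x2) = ((i, j) : Fin p × Fin p) ∧
              (y1, y2) = ((j, i) : Fin p × Fin p) := by
            rcases h1 with ⟨f1, f2⟩ | ⟨f1, f2, f3⟩ <;>
              rcases h2 with ⟨k1, k2⟩ | ⟨k1, k2, k3⟩ <;>
              rcases h3 with ⟨g1, g2⟩ | ⟨g1, g2, g3⟩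
            · exact absurd ((f1 : i = x1).trans ((k1 : x1 = y1).trans (g1 : y1 = j))) hij
            · exact absurd ((g2 : b = y1).trans ((k1 : x1 = y1).symm.trans
                (f1 : i = x1).symm)) hbi
            · refine ⟨?_, ?_⟩ <;> simp only [Prod.mk.injEq]
              · exact ⟨(f1 : i = x1).symm, (k1 : y1 = x2).symm.trans (g1 : y1 = j)⟩
              · exact ⟨(g1 : y1 = j), (k2 : y2 = x1).trans (f1 : i = x1).symm⟩
            · exact absurd ((f1 : i = x1).trans ((g1 : j = y2).trans
                (k2 : y2 = x1)).symm) hij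
            · exact absurd ((f1 : x1 = a).symm.trans ((k1 : x1 = y1).trans
                (g1 : y1 = j))) haj
            · exact absurd ((f1 : x1 = a).symm.trans ((k1 : x1 = y1).trans
                (g2 : b = y1).symm)) hab
            · exact absurd (((k1 : y1 = x2).trans (f2 : x2 = i)).symm.trans
                (g1 : y1 = j)) hij
            · exact absurd ((g2 : b = y1).trans ((k1 : y1 = x2).trans
                (f2 : x2 = i))) hbi
          rw [key.1, key.2]
        | cons h4 q4 =>
          exfalso
          simp only [SimpleGraph.Walk.length_cons] at hlen
          omega

lemma shortest2 {p : ℕ} {i j c : Fin p} (hij : i ≠ j) (hci : c ≠ i) (hcj : c ≠ j)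
    (q : (SP2 p).Walk (i, j) (j, c)) (hq : IsShortest (SP2 p) q) :
    q.support = [(i, j), (j, i), (j, c)] := by
  have e2 : (SP2 p).Adj (i, j) (j, i) := Or.inr ⟨rfl, rfl, hij⟩
  have e3 : (SP2 p).Adj (j, i) (j, c) := Or.inl ⟨rfl, fun h => hci h.symm⟩
  have hd : (SP2 p).dist (i, j) (j, c) ≤ 2 := by
    have := SimpleGraph.dist_le (SimpleGraph.Walk.cons e2 (SimpleGraph.Walk.cons e3
      SimpleGraph.Walk.nil))
    simpa using this
  have hlen : q.length ≤ 2 := hq.2 ▸ hd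
  cases q with
  | nil => exact absurd rfl hij
  | @cons _ x _ h1 q1 =>
    obtain ⟨x1, x2⟩ := x
    cases q1 with
    | nil =>
      rcases h1 with ⟨f1, f2⟩ | ⟨f1, f2, f3⟩
      · exact absurd (f1 : i = j) hij
      · exact absurd (f2 : c = i) hci
    | @cons _ y _ h2 q2 =>
      cases q2 with
      | nil =>
        simp only [SimpleGraph.Walk.support_cons, SimpleGraph.Walk.support_nil]
        have key : (x1, x2) = ((j, i) : Fin p × Fin p) := by
          rcases h1 with ⟨f1, f2⟩ | ⟨f1, f2, f3⟩ <;>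
            rcases h2 with ⟨g1, g2⟩ | ⟨g1, g2, g3⟩
          · exact absurd ((f1 : i = x1).trans (g1 : x1 = j)) hij
          · exact absurd ((g2 : c = x1).trans (f1 : i = x1).symm) hci
          · simp only [Prod.mk.injEq]
            exact ⟨(f1 : x1 = j), (f2 : x2 = i)⟩
          · exact absurd ((g1 : j = x2).trans (f2 : x2 = i)).symm hij
        rw [key]
      | cons h3 q3 =>
        exfalso
        simp only [SimpleGraph.Walk.length_cons] at hlen
        omega


lemma exists_third {p : ℕ} (hp : 3 ≤ p) (i c : Fin p) : ∃ b : Fin p, b ≠ i ∧ b ≠ c := by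
  by_contra h
  push_neg at h
  have hsub : (Finset.univ : Finset (Fin p)) ⊆ {i, c} := by
    intro b _
    by_cases hb : b = i
    · simp [hb]
    · simp [h b hb]
  have := Finset.card_le_card hsub
  have h2 : ({i, c} : Finset (Fin p)).card ≤ 2 := by
    apply le_trans (Finset.card_insert_le _ _)
    simp
  simp [Finset.card_univ] at this
  omega

lemma key1 {p : ℕ} (hp : 3 ≤ p) {X : Set (Fin p × Fin p)}
    (hvis : ∀ u ∈ X, ∀ v, Visible (SP2 p) X u v)
    {i j : Fin p} (hij : i ≠ j) (hmem : (i, j) ∈ X)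
    {c : Fin p} (hcj : c ≠ j) (hc : (i, c) ∈ X) : False := by
  obtain ⟨b, hbi, hbc⟩ := exists_third hp i c
  obtain ⟨q, hq, havoid⟩ := hvis (i, c) hc (j, b)
  have hsupp := shortest3 hij hcj hbi (fun h => hbc h.symm) q hq
  have hm : (i, j) ∈ q.support := by rw [hsupp]; simp
  rcases havoid _ hm hmem with h | h
  · exact hcj (congrArg Prod.snd h).symm
  · exact hij (congrArg Prod.fst h)

lemma key2 {p : ℕ} (hp : 3 ≤ p) {X : Set (Fin p × Fin p)}
    (hvis : ∀ u ∈ X, ∀ v, Visible (SP2 p) X u v)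
    {i j : Fin p} (hij : i ≠ j) (hmem : (i, j) ∈ X)
    (b : Fin p) (hmem2 : (j, b) ∈ X) : False := by
  by_cases hbi : b = i
  · subst hbi
    obtain ⟨c, hci, hcj⟩ := exists_third hp b j
    obtain ⟨q, hq, havoid⟩ := hvis (b, j) hmem (j, c)
    have hsupp := shortest2 hij hci hcj q hq
    have hm : (j, b) ∈ q.support := by rw [hsupp]; simp
    rcases havoid _ hm hmem2 with h | h
    · exact hij ((congrArg Prod.fst h) : j = b).symm
    · exact hci ((congrArg Prod.snd h) : b = c).symm
  · obtain ⟨a, haj, hab⟩ := exists_third hp j b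
    obtain ⟨q, hq, havoid⟩ := hvis (j, b) hmem2 (i, a)
    have hsupp := shortest3 hij.symm hbi haj (fun h => hab h.symm) q hq
    have hm : (i, j) ∈ q.support := by rw [hsupp]; simp
    rcases havoid _ hm hmem with h | h
    · exact hij ((congrArg Prod.fst h) : i = j)
    · exact haj ((congrArg Prod.snd h) : j = a).symm

lemma block_unique {p : ℕ} (hp : 3 ≤ p) {X : Set (Fin p × Fin p)}
    (hvis : ∀ u ∈ X, ∀ v, Visible (SP2 p) X u v) :
    ∀ i a b : Fin p, (i, a) ∈ X → (i, b) ∈ X → a = b := by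
  intro i a b ha hb
  by_contra hab
  by_cases hai : a = i
  · subst hai
    exact key1 hp hvis hab hb hab ha
  · exact key1 hp hvis (fun h => hai h.symm) ha (fun h => hab h.symm) hb


def Diag (p : ℕ) : Set (Fin p × Fin p) := {v : Fin p × Fin p | v.1 = v.2}

lemma diag_ncard {p : ℕ} : (Diag p).ncard = p := by
  have h : Diag p = (fun k : Fin p => (k, k)) '' Set.univ := by
    ext ⟨a, b⟩
    simp only [Diag, Set.mem_setOf_eq, Set.image_univ, Set.mem_range, Prod.mk.injEq]
    constructor
    · rintro h; exact ⟨a, rfl, h⟩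
    · rintro ⟨k, h1, h2⟩; rw [← h1, ← h2]
  rw [h, Set.ncard_image_of_injective _ (fun x y h => by
    simpa using (congrArg Prod.fst h)), Set.ncard_univ]
  simp

lemma ncard_le {p : ℕ} (hp : 3 ≤ p) {X : Set (Fin p × Fin p)}
    (hvis : ∀ u ∈ X, ∀ v, Visible (SP2 p) X u v) : X.ncard ≤ p := by
  have hinj : Function.Injective (fun x : X => (x : Fin p × Fin p).1) := by
    rintro ⟨⟨x1, x2⟩, hx⟩ ⟨⟨y1, y2⟩, hy⟩ h
    simp only at h
    subst h
    have := block_unique hp hvis x1 x2 y2 hx hy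
    subst this
    rfl
  have := Nat.card_le_card_of_injective _ hinj
  rw [Nat.card_coe_set_eq] at this
  simpa using this

lemma eq_diag {p : ℕ} (hp : 3 ≤ p) {X : Set (Fin p × Fin p)}
    (hvis : ∀ u ∈ X, ∀ v, Visible (SP2 p) X u v) (hcard : X.ncard = p) :
    X = Diag p := by
  have hsub : X ⊆ Diag p := by
    rintro ⟨i, j⟩ hmem
    by_contra hij
    have hij' : i ≠ j := hij
    -- block j of X is empty
    have hempty : ∀ b : Fin p, (j, b) ∉ X := fun b hb => key2 hp hvis hij' hmem b hb
    -- so X injects into Fin p \ {j}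
    have hinj : Function.Injective (fun x : X =>
        (⟨(x : Fin p × Fin p).1, fun h => hempty (x : Fin p × Fin p).2
          (by rw [← h, Prod.mk.eta]; exact x.2)⟩ : {k : Fin p // k ≠ j})) := by
      rintro ⟨⟨x1, x2⟩, hx⟩ ⟨⟨y1, y2⟩, hy⟩ h
      simp only [Subtype.mk.injEq] at h
      subst h
      have := block_unique hp hvis x1 x2 y2 hx hy
      subst this
      rfl
    have hle := Nat.card_le_card_of_injective _ hinj
    rw [Nat.card_coe_set_eq, hcard] at hle
    have hcc : Nat.card {k : Fin p // k ≠ j} = p - 1 := by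
      rw [Nat.card_eq_fintype_card]
      simp [Fintype.card_subtype_compl]
    rw [hcc] at hle
    omega
  exact Set.eq_of_subset_of_ncard_le hsub (by rw [diag_ncard, hcard]) (Set.toFinite _)


lemma diag_totalGP {p : ℕ} : TotalGPSet (SP2 p) (Diag p) := by
  intro u v q hq w hw hwd
  obtain ⟨w1, w2⟩ := w
  have hww : w1 = w2 := hwd
  subst hww
  exact simplicial_not_internal (diag_simplicial w1) q hq.1 hq.2 hw

lemma diag_totalMV {p : ℕ} : TotalMVSet (SP2 p) (Diag p) :=
  fun u v => pos_to_vis (diag_totalGP u v)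

lemma diag_outerMV {p : ℕ} : OuterMVSet (SP2 p) (Diag p) :=
  ⟨fun u _ v _ => diag_totalMV u v, fun u _ v _ => diag_totalMV u v⟩

lemma diag_outerGP {p : ℕ} : OuterGPSet (SP2 p) (Diag p) :=
  ⟨fun u _ v _ => diag_totalGP u v, fun u _ v _ => diag_totalGP u v⟩

lemma hvis_totalMV {p : ℕ} {X : Set (Fin p × Fin p)} (h : TotalMVSet (SP2 p) X) :
    ∀ u ∈ X, ∀ v, Visible (SP2 p) X u v := fun u _ v => h u v

lemma hvis_outerMV {p : ℕ} {X : Set (Fin p × Fin p)} (h : OuterMVSet (SP2 p) X) :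
    ∀ u ∈ X, ∀ v, Visible (SP2 p) X u v := by
  intro u hu v
  by_cases hv : v ∈ X
  · exact h.1 u hu v hv
  · exact h.2 u hu v hv

lemma hvis_totalGP {p : ℕ} {X : Set (Fin p × Fin p)} (h : TotalGPSet (SP2 p) X) :
    ∀ u ∈ X, ∀ v, Visible (SP2 p) X u v := fun u _ v => pos_to_vis (h u v)

lemma hvis_outerGP {p : ℕ} {X : Set (Fin p × Fin p)} (h : OuterGPSet (SP2 p) X) :
    ∀ u ∈ X, ∀ v, Visible (SP2 p) X u v := by
  intro u hu v
  by_cases hv : v ∈ X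
  · exact pos_to_vis (h.1 u hu v hv)
  · exact pos_to_vis (h.2 u hu v hv)

lemma master {p : ℕ} (hp : 3 ≤ p) {P : Set (Fin p × Fin p) → Prop}
    (hdiag : P (Diag p))
    (hP : ∀ X, P X → ∀ u ∈ X, ∀ v, Visible (SP2 p) X u v) :
    maxCard P = p ∧ {X : Set (Fin p × Fin p) | P X ∧ X.ncard = p} = {Diag p} := by
  have hset : {X : Set (Fin p × Fin p) | P X ∧ X.ncard = p} = {Diag p} := by
    ext X
    simp only [Set.mem_setOf_eq, Set.mem_singleton_iff]
    constructor
    · rintro ⟨h1, h2⟩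
      exact eq_diag hp (hP X h1) h2
    · rintro rfl
      exact ⟨hdiag, diag_ncard⟩
  refine ⟨?_, hset⟩
  unfold maxCard
  apply le_antisymm
  · refine csSup_le ⟨p, ⟨Diag p, hdiag, diag_ncard⟩⟩ ?_
    rintro n ⟨X, hX, rfl⟩
    exact ncard_le hp (hP X hX)
  · exact le_csSup ⟨p, by rintro n ⟨X, hX, rfl⟩; exact ncard_le hp (hP X hX)⟩
      ⟨Diag p, hdiag, diag_ncard⟩

end Stmt10Aux

/-- `μ_t(S_p^2) = μ_o(S_p^2) = gp_t(S_p^2) = gp_o(S_p^2) = p`, with the diagonal as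
the unique maximum set in each case. -/
theorem stmt_10 (p : ℕ) (hp : 3 ≤ p) :
    (maxCard (TotalMVSet (SP2 p)) = p ∧
      {X : Set (Fin p × Fin p) | TotalMVSet (SP2 p) X ∧ X.ncard = p} =
        {{v : Fin p × Fin p | v.1 = v.2}}) ∧
    (maxCard (OuterMVSet (SP2 p)) = p ∧
      {X : Set (Fin p × Fin p) | OuterMVSet (SP2 p) X ∧ X.ncard = p} =
        {{v : Fin p × Fin p | v.1 = v.2}}) ∧
    (maxCard (TotalGPSet (SP2 p)) = p ∧
      {X : Set (Fin p × Fin p) | TotalGPSet (SP2 p) X ∧ X.ncard = p} =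
        {{v : Fin p × Fin p | v.1 = v.2}}) ∧
    (maxCard (OuterGPSet (SP2 p)) = p ∧
      {X : Set (Fin p × Fin p) | OuterGPSet (SP2 p) X ∧ X.ncard = p} =
        {{v : Fin p × Fin p | v.1 = v.2}}) := by
  refine ⟨?_, ?_, ?_, ?_⟩
  · exact Stmt10Aux.master hp Stmt10Aux.diag_totalMV (fun X h => Stmt10Aux.hvis_totalMV h)
  · exact Stmt10Aux.master hp Stmt10Aux.diag_outerMV (fun X h => Stmt10Aux.hvis_outerMV h)
  · exact Stmt10Aux.master hp Stmt10Aux.diag_totalGP (fun X h => Stmt10Aux.hvis_totalGP h)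
  · exact Stmt10Aux.master hp Stmt10Aux.diag_outerGP (fun X h => Stmt10Aux.hvis_outerGP h)
end
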